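/- arXiv:2212.00927 — 13 statements merged into one kernel-verified Lean document; each statement's English description precedes it below -/
import Mathlib

section
/- Switching subgradient method convergence (Theorem 1). Let Z ⊆ ℝ^d be nonempty, closed and convex, let μ > 0, τ > 0, L₀ ≥ 0, L₁ ≥ 0, and let F, G : ℝ^d → ℝ be convex on Z. Let z* ∈ Z satisfy G(z*) ≤ 0. Define step sizes α_t = 2/(μ(t+2) + L₁²/(μ(t+1))). Suppose sequences z : ℕ → Z and ζ : ℕ → ℝ^d satisfy z₀ ∈ Z with G(z₀) ≤ τ and, for every t ∈ ℕ: if G(z_t) ≤ τ then ζ_t is a μ-strong subgradient of F at z_t over Z with ‖ζ_t‖² ≤ L₀² + L₁(F(z_t) − F(z*)), while if G(z_t) > τ then ζ_t is a μ-strong subgradient of G at z_t over Z with ‖ζ_t‖² ≤ L₀² + L₁(G(z_t) − G(z*)); and z_{t+1} = proj_Z(z_t − α_t ζ_t). Then for every natural number T ≥ 1 with T ≥ 8L₀²/(μτ) and T ≥ sqrt(2L₁²‖z₀ − z*‖²/(μτ)), the index set I = {t : t < T, G(z_t) ≤ τ} contains 0, and the weighted average z̄_T = (Σ_{t∈I}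 (t+1) z_t)/(Σ_{t∈I} (t+1)) satisfies F(z̄_T) − F(z*) ≤ τ and G(z̄_T) ≤ τ. -/
open RealInnerProductSpace Finset

namespace SwitchingAuxiliary

/-! ### Pure real-number auxiliary lemmas -/

/-- core per-step inequality -/
lemma core_step {μ L1 L0 av r r' N ip Δ : ℝ} (hav : 0 ≤ av)
    (hs1 : Δ + μ/2*r ≤ ip) (hs2 : N ≤ L0^2 + L1*Δ) (hs3 : r' ≤ r - 2*av*ip + av^2*N) :
    av*(2 - av*L1)*Δ ≤ (1 - μ*av)*r - r' + av^2*L0^2 := by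
  nlinarith [mul_le_mul_of_nonneg_left hs1 (by linarith : (0:ℝ) ≤ 2*av),
    mul_le_mul_of_nonneg_left hs2 (sq_nonneg av)]

lemma beta_w {μ L1 A av : ℝ} (hμ : 0 < μ) (hA : 0 < A)
    (hden : 0 < A*(A+μ) + L1^2 - A*L1)
    (hal : av * (A*(A+μ) + L1^2) = 2*A) :
    (A*(A+μ)+L1^2)^2 / (4*μ*(A*(A+μ)+L1^2-A*L1)) * (av*(2 - av*L1)) = A/μ := by
  have hql : (0:ℝ) < A*(A+μ)+L1^2 := by nlinarith [sq_nonneg L1]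
  field_simp
  linear_combination (2*(A*(A+μ)+L1^2) - L1*(av*(A*(A+μ)+L1^2)+2*A)) * hal

lemma lo_w {μ L1 A av : ℝ} (hμ : 0 < μ) (hA : 0 < A)
    (hal : av * (A*(A+μ) + L1^2) = 2*A) :
    (A*(A+μ)+L1^2)/(2*μ) * av = A/μ := by
  have hql : (0:ℝ) < A*(A+μ)+L1^2 := by nlinarith [sq_nonneg L1]
  field_simp
  linear_combination hal

lemma chain_lo {μ L1 A av : ℝ} (hμ : 0 < μ) (hA : 0 < A)
    (hal : av * (A*(A+μ) + L1^2) = 2*A) :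
    (A*(A+μ)+L1^2)/(2*μ) * (1 - μ*av) = (A*(A-μ)+L1^2)/(2*μ) := by
  have hql : (0:ℝ) < A*(A+μ)+L1^2 := by nlinarith [sq_nonneg L1]
  field_simp
  linear_combination (-μ)*hal

lemma chain_junc {μ L1 A av : ℝ} (hμ : 0 < μ) (hAμ : μ ≤ A)
    (hal : av * (A*(A+μ) + L1^2) = 2*A) :
    (A*(A+μ)+L1^2)^2 / (4*μ*(A*(A+μ)+L1^2-A*L1)) * (1 - μ*av) ≤ (A*(A-μ)+L1^2)/(2*μ) := by
  have hA : 0 < A := lt_of_lt_of_le hμ hAμ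
  have hql : (0:ℝ) < A*(A+μ)+L1^2 := by nlinarith [sq_nonneg L1]
  have hden : (0:ℝ) < A*(A+μ)+L1^2-A*L1 := by nlinarith [sq_nonneg (A-L1), mul_pos hA hμ]
  have h2 : A*(A+μ)+L1^2 ≤ 2*(A*(A+μ)+L1^2-A*L1) := by
    nlinarith [sq_nonneg (A-L1), mul_pos hA hμ]
  have hμone : (1 - μ*av) = (A*(A-μ)+L1^2)/(A*(A+μ)+L1^2) := by
    field_simp
    linear_combination (-μ)*hal
  rw [hμone]
  rw [div_mul_div_comm, div_le_div_iff₀ (by positivity) (by positivity)]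
  have hPL : 0 ≤ A*(A-μ)+L1^2 := by nlinarith [sq_nonneg L1]
  nlinarith [mul_le_mul_of_nonneg_right h2 hPL, sq_nonneg L1, mul_pos hql hden,
    mul_nonneg (mul_nonneg hPL hql.le) hμ.le]

lemma chain_bb {μ L1 A av : ℝ} (hμ : 0 < μ) (hL1 : 0 ≤ L1) (hAμ : 2*μ ≤ A)
    (hcond : L1^2 ≤ A*(A-μ))
    (hal : av * (A*(A+μ) + L1^2) = 2*A) :
    (A*(A+μ)+L1^2)^2 / (4*μ*(A*(A+μ)+L1^2-A*L1)) * (1 - μ*av)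
      ≤ ((A-μ)*A+L1^2)^2 / (4*μ*((A-μ)*A+L1^2-(A-μ)*L1)) := by
  have hA : 0 < A := by linarith
  have hA' : 0 < A - μ := by linarith
  have hql : (0:ℝ) < A*(A+μ)+L1^2 := by nlinarith [sq_nonneg L1]
  have hden : (0:ℝ) < A*(A+μ)+L1^2-A*L1 := by nlinarith [sq_nonneg (A-L1), mul_pos hA hμ]
  have hden' : (0:ℝ) < (A-μ)*A+L1^2-(A-μ)*L1 := by
    nlinarith [sq_nonneg (A-μ-L1), mul_pos hA' hA]
  have hPL : (0:ℝ) < (A-μ)*A+L1^2 := by nlinarith [sq_nonneg L1, mul_pos hA' hA]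
  have hμone : (1 - μ*av) = ((A-μ)*A+L1^2)/(A*(A+μ)+L1^2) := by
    field_simp
    linear_combination (-μ)*hal
  rw [hμone, div_mul_div_comm, div_le_div_iff₀ (by positivity) (by positivity)]
  have key : (A*(A+μ)+L1^2) * ((A-μ)*A+L1^2-(A-μ)*L1)
      ≤ ((A-μ)*A+L1^2) * (A*(A+μ)+L1^2-A*L1) := by
    nlinarith [mul_nonneg (mul_nonneg hμ.le hL1) (by nlinarith : (0:ℝ) ≤ A*(A-μ) - L1^2)]
  nlinarith [mul_le_mul_of_nonneg_left key (by positivity : (0:ℝ) ≤ 4*μ*((A-μ)*A+L1^2)),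
    mul_pos hPL hql]

lemma avL1_le_one {μ L1 A av : ℝ} (hμ : 0 < μ) (hL1 : 0 ≤ L1) (hA : 0 < A)
    (hal : av * (A*(A+μ) + L1^2) = 2*A) : av*L1 ≤ 1 := by
  have hql : (0:ℝ) < A*(A+μ)+L1^2 := by nlinarith [sq_nonneg L1]
  rw [← mul_le_mul_iff_of_pos_right hql]
  calc av*L1*(A*(A+μ)+L1^2) = L1*(av*(A*(A+μ)+L1^2)) := by ring
    _ = 2*(A*L1) := by rw [hal]; ring
    _ ≤ A*(A+μ)+L1^2 := by nlinarith [sq_nonneg (A-L1), mul_pos hA hμ]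
    _ = 1*(A*(A+μ)+L1^2) := by ring

lemma av_pos {μ L1 A av : ℝ} (hμ : 0 < μ) (hA : 0 < A)
    (hal : av * (A*(A+μ) + L1^2) = 2*A) : 0 < av := by
  have hql : (0:ℝ) < A*(A+μ)+L1^2 := by nlinarith [sq_nonneg L1]
  by_contra h
  push_neg at h
  nlinarith [mul_le_mul_of_nonneg_right h hql.le]

lemma hi_term {μ L1 A av : ℝ} (hμ : 0 < μ) (hA : 0 < A)
    (hal : av * (A*(A+μ) + L1^2) = 2*A) :
    (A*(A+μ)+L1^2)^2 / (4*μ*(A*(A+μ)+L1^2-A*L1)) * av^2 ≤ 2/μ := by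
  have hql : (0:ℝ) < A*(A+μ)+L1^2 := by nlinarith [sq_nonneg L1]
  have hden : (0:ℝ) < A*(A+μ)+L1^2-A*L1 := by nlinarith [sq_nonneg (A-L1), mul_pos hA hμ]
  have e1 : (A*(A+μ)+L1^2)^2 * av^2 = 4*A^2 := by
    linear_combination (av*(A*(A+μ)+L1^2)+2*A)*hal
  rw [div_mul_eq_mul_div, show (A*(A+μ)+L1^2)^2*av^2 = 4*A^2 from e1,
    div_le_div_iff₀ (by positivity) hμ]
  nlinarith [sq_nonneg (A-L1), sq_nonneg L1, mul_pos hA hμ]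

lemma lo_term {μ L1 A av c : ℝ} (hμ : 0 < μ) (hc : 0 ≤ c) (hL1p : 0 < L1) (hA : 0 < A)
    (hA2 : A ≤ 2*L1) (hal : av * (A*(A+μ) + L1^2) = 2*A) :
    (A*(A+μ)+L1^2)/(2*μ)*av^2*c + A/μ*(1-av*L1)*(c/L1) ≤ 2/μ*c := by
  have hql : (0:ℝ) < A*(A+μ)+L1^2 := by nlinarith [sq_nonneg L1]
  have e1 : (A*(A+μ)+L1^2)/(2*μ)*av^2*c = A*av*c/μ := by
    field_simp
    linear_combination (av*c)*hal
  have e2 : A/μ*(1-av*L1)*(c/L1) = A*c/(μ*L1) - A*av*c/μ := by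
    field_simp
  rw [e1, e2]
  have e3 : A*av*c/μ + (A*c/(μ*L1) - A*av*c/μ) = A*c/(μ*L1) := by ring
  rw [e3, div_le_iff₀ (by positivity)]
  have e4 : 2/μ*c*(μ*L1) = 2*L1*c := by field_simp
  rw [e4]
  nlinarith [mul_le_mul_of_nonneg_right hA2 hc]

/-! ### The weight chain and the master summation lemma -/

/-- `A` value -/
noncomputable def Af (μ : ℝ) (t : ℕ) : ℝ := μ*((t:ℝ)+1)

/-- the weight chain -/
noncomputable def gammaF (μ L1 : ℝ) (k t : ℕ) : ℝ :=
  if t < k then (Af μ t*(Af μ t+μ) + L1^2)/(2*μ)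
  else (Af μ t*(Af μ t+μ) + L1^2)^2 / (4*μ*(Af μ t*(Af μ t+μ) + L1^2 - Af μ t*L1))

/-- cost sequence -/
noncomputable def cstF (μ L1 L0 : ℝ) (α : ℕ → ℝ) (k t : ℕ) : ℝ :=
  if t < k then ((t:ℝ)+1)*(1 - α t*L1)*(L0^2/L1) else 0

section Chain

variable {μ L1 L0 : ℝ} {α : ℕ → ℝ} {k : ℕ}

lemma Af_pos (hμ : 0 < μ) (t : ℕ) : 0 < Af μ t := by
  unfold Af; positivity

lemma Af_succ (μ : ℝ) (t : ℕ) : Af μ (t+1) = Af μ t + μ := by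
  unfold Af; push_cast; ring

lemma Af_ge (hμ : 0 < μ) (t : ℕ) : μ ≤ Af μ t := by
  unfold Af
  nlinarith [Nat.cast_nonneg (α := ℝ) t]

lemma den_pos (hμ : 0 < μ) (t : ℕ) :
    (0:ℝ) < Af μ t*(Af μ t+μ) + L1^2 - Af μ t*L1 := by
  nlinarith [sq_nonneg (Af μ t - L1), mul_pos (Af_pos hμ t) hμ]

lemma gammaF_nonneg (hμ : 0 < μ) (t : ℕ) : 0 ≤ gammaF μ L1 k t := by
  unfold gammaF
  split
  · have := Af_pos hμ t
    have := sq_nonneg L1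
    positivity
  · have h1 := den_pos (L1 := L1) hμ t
    positivity

lemma gammaF_chain (hμ : 0 < μ) (hL1 : 0 ≤ L1)
    (hk_hi : ∀ t : ℕ, k ≤ t → L1 ≤ Af μ t)
    (hαid : ∀ t : ℕ, α t * (Af μ t*(Af μ t+μ) + L1^2) = 2*Af μ t) (t : ℕ) :
    gammaF μ L1 k (t+1) * (1 - μ * α (t+1)) ≤ gammaF μ L1 k t := by
  have hAs : 0 < Af μ (t+1) := Af_pos hμ (t+1)
  have halS := hαid (t+1)
  have hsucc := Af_succ μ t
  by_cases h1 : t+1 < k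
  · have h0 : t < k := by omega
    rw [gammaF, if_pos h1, gammaF, if_pos h0]
    rw [chain_lo hμ hAs halS, hsucc]
    have e : (Af μ t + μ)*((Af μ t + μ)-μ) = Af μ t*(Af μ t+μ) := by ring
    rw [e]
  · by_cases h0 : t < k
    · rw [gammaF, if_neg h1, gammaF, if_pos h0]
      have hj := chain_junc (L1 := L1) hμ (by rw [hsucc]; linarith [Af_pos hμ t] : μ ≤ Af μ (t+1)) halS
      rw [hsucc] at hj
      have e : (Af μ t + μ)*((Af μ t + μ)-μ) = Af μ t*(Af μ t+μ) := by ring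
      rw [e] at hj
      rw [hsucc]
      exact hj
    · push_neg at h0
      rw [gammaF, if_neg h1, gammaF, if_neg (not_lt.mpr h0)]
      have hLa : L1 ≤ Af μ t := hk_hi t h0
      have hApos := Af_pos hμ t
      have hmul : L1*L1 ≤ Af μ t * Af μ t := mul_le_mul hLa hLa hL1 hApos.le
      have hcond : L1^2 ≤ Af μ (t+1)*(Af μ (t+1)-μ) := by
        rw [hsucc]; nlinarith
      have hb := chain_bb hμ hL1 (by rw [hsucc]; linarith [Af_ge hμ t] : 2*μ ≤ Af μ (t+1)) hcond halS
      have e1 : (Af μ (t+1)-μ)*(Af μ (t+1)) = Af μ t*(Af μ t+μ) := by rw [hsucc]; ring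
      have e2 : (Af μ (t+1)-μ) = Af μ t := by rw [hsucc]; ring
      rw [e1, e2] at hb
      exact hb

lemma gammaF_start (hμ : 0 < μ)
    (hαid : ∀ t : ℕ, α t * (Af μ t*(Af μ t+μ) + L1^2) = 2*Af μ t) :
    gammaF μ L1 k 0 * (1 - μ * α 0) ≤ L1^2/(2*μ) := by
  have hA0 : Af μ 0 = μ := by unfold Af; norm_num
  have hal0 := hαid 0
  by_cases h0 : 0 < k
  · rw [gammaF, if_pos h0, chain_lo hμ (Af_pos hμ 0) hal0, hA0]
    have e : μ*(μ-μ) + L1^2 = L1^2 := by ring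
    rw [e]
  · rw [gammaF, if_neg (by omega : ¬ (0 < k))]
    have hj := chain_junc (L1 := L1) hμ (by rw [hA0] : μ ≤ Af μ 0) hal0
    rw [hA0] at hj
    have e : μ*(μ-μ) + L1^2 = L1^2 := by ring
    rw [e] at hj
    rw [hA0]
    exact hj

lemma gammaF_w_hi (hμ : 0 < μ) (t : ℕ) (ht : k ≤ t)
    (hαid : ∀ t : ℕ, α t * (Af μ t*(Af μ t+μ) + L1^2) = 2*Af μ t) :
    gammaF μ L1 k t * (α t * (2 - α t * L1)) = (t:ℝ)+1 := by
  rw [gammaF, if_neg (not_lt.mpr ht), beta_w hμ (Af_pos hμ t) (den_pos hμ t) (hαid t)]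
  unfold Af
  field_simp

lemma gammaF_cost (hμ : 0 < μ) (hL1 : 0 ≤ L1)
    (hk_lo : ∀ t : ℕ, t < k → (0 < L1 ∧ Af μ t ≤ 2*L1))
    (hαid : ∀ t : ℕ, α t * (Af μ t*(Af μ t+μ) + L1^2) = 2*Af μ t)
    (Dlt : ℝ) (hDlow : 0 ≤ L0^2 + L1 * Dlt) (t : ℕ) :
    ((t:ℝ)+1) * Dlt ≤ gammaF μ L1 k t * (α t * (2 - α t * L1)) * Dlt + cstF μ L1 L0 α k t := by
  by_cases ht : t < k
  · obtain ⟨hL1p, _⟩ := hk_lo t ht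
    rw [gammaF, if_pos ht, cstF, if_pos ht]
    have e1 : (Af μ t*(Af μ t+μ) + L1^2)/(2*μ) * (α t * (2 - α t * L1))
        = ((Af μ t*(Af μ t+μ) + L1^2)/(2*μ) * α t) * (2 - α t*L1) := by ring
    rw [e1, lo_w hμ (Af_pos hμ t) (hαid t)]
    have e2 : Af μ t/μ = (t:ℝ)+1 := by unfold Af; field_simp
    rw [e2]
    have h1 : (0:ℝ) ≤ Dlt + L0^2/L1 := by
      have h2 : (0:ℝ) ≤ (L0^2 + L1*Dlt)/L1 := div_nonneg hDlow hL1p.le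
      have h3 : (L0^2 + L1*Dlt)/L1 = L0^2/L1 + Dlt := by field_simp
      linarith [h3 ▸ h2]
    have h4 : (0:ℝ) ≤ ((t:ℝ)+1)*(1 - α t*L1) := by
      have h5 := avL1_le_one hμ hL1 (Af_pos hμ t) (hαid t)
      have h6 : (0:ℝ) ≤ (t:ℝ)+1 := by positivity
      nlinarith
    nlinarith [mul_nonneg h4 h1]
  · rw [gammaF_w_hi hμ t (not_lt.mp ht) hαid, cstF, if_neg ht]
    linarith

lemma gammaF_term (hμ : 0 < μ) (hL0 : (0:ℝ) ≤ L0^2)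
    (hk_lo : ∀ t : ℕ, t < k → (0 < L1 ∧ Af μ t ≤ 2*L1))
    (hαid : ∀ t : ℕ, α t * (Af μ t*(Af μ t+μ) + L1^2) = 2*Af μ t) (t : ℕ) :
    gammaF μ L1 k t * (α t)^2 * L0^2 + cstF μ L1 L0 α k t ≤ 2/μ * L0^2 := by
  by_cases ht : t < k
  · obtain ⟨hL1p, hA2⟩ := hk_lo t ht
    rw [gammaF, if_pos ht, cstF, if_pos ht]
    have hlt := lo_term (av := α t) hμ hL0 hL1p (Af_pos hμ t) hA2 (hαid t)
    have e2 : Af μ t/μ = (t:ℝ)+1 := by unfold Af; field_simp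
    rw [e2] at hlt
    linarith
  · rw [gammaF, if_neg ht, cstF, if_neg ht]
    have hht := hi_term hμ (Af_pos hμ t) (hαid t)
    nlinarith [mul_le_mul_of_nonneg_right hht hL0]

/-- The master summation bound. -/
lemma master (hμ : 0 < μ) (hL1 : 0 ≤ L1) (hL0 : (0:ℝ) ≤ L0^2)
    (hk_hi : ∀ t : ℕ, k ≤ t → L1 ≤ Af μ t)
    (hk_lo : ∀ t : ℕ, t < k → (0 < L1 ∧ Af μ t ≤ 2*L1))
    (hαid : ∀ t : ℕ, α t * (Af μ t*(Af μ t+μ) + L1^2) = 2*Af μ t)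
    (Dl r N ip : ℕ → ℝ)
    (hrnn : ∀ t, 0 ≤ r t)
    (hs1 : ∀ t, Dl t + μ/2 * r t ≤ ip t)
    (hs2 : ∀ t, N t ≤ L0^2 + L1 * Dl t)
    (hNnn : ∀ t, 0 ≤ N t)
    (hs3 : ∀ t, r (t+1) ≤ r t - 2*(α t)*ip t + (α t)^2*N t)
    (T : ℕ) (hT1 : 1 ≤ T) :
    ∑ t ∈ range T, ((t:ℝ)+1) * Dl t ≤ L1^2/(2*μ) * r 0 + (T:ℝ) * (2/μ * L0^2) := by
  have havpos : ∀ t : ℕ, 0 < α t := fun t => av_pos hμ (Af_pos hμ t) (hαid t)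
  have hPS : ∀ t : ℕ, gammaF μ L1 k t * (α t * (2 - α t*L1)) * Dl t
      ≤ gammaF μ L1 k t * (1 - μ*α t) * r t - gammaF μ L1 k t * r (t+1)
        + gammaF μ L1 k t * (α t)^2 * L0^2 := by
    intro t
    have hcore := core_step (havpos t).le (hs1 t) (hs2 t) (hs3 t)
    nlinarith [mul_le_mul_of_nonneg_left hcore (gammaF_nonneg (L1 := L1) (k := k) hμ t)]
  have htele : ∀ m : ℕ,
      ∑ t ∈ range (m+1), gammaF μ L1 k t * (α t * (2 - α t*L1)) * Dl t
        + gammaF μ L1 k m * r (m+1)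
      ≤ gammaF μ L1 k 0 * (1 - μ*α 0) * r 0
        + ∑ t ∈ range (m+1), gammaF μ L1 k t * (α t)^2 * L0^2 := by
    intro m
    induction m with
    | zero =>
      simp only [zero_add, Finset.sum_range_one]
      linarith [hPS 0]
    | succ n ih =>
      rw [sum_range_succ, sum_range_succ (f := fun t => gammaF μ L1 k t * (α t)^2 * L0^2)]
      have h1 := hPS (n+1)
      have h2 : gammaF μ L1 k (n+1) * (1 - μ*α (n+1)) * r (n+1) ≤ gammaF μ L1 k n * r (n+1) :=
        mul_le_mul_of_nonneg_right (gammaF_chain hμ hL1 hk_hi hαid n) (hrnn (n+1))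
      linarith
  have hDlow : ∀ t : ℕ, 0 ≤ L0^2 + L1 * Dl t := fun t => le_trans (hNnn t) (hs2 t)
  obtain ⟨m, rfl⟩ : ∃ m, T = m+1 := ⟨T-1, by omega⟩
  have h1 : ∑ t ∈ range (m+1), ((t:ℝ)+1) * Dl t
      ≤ ∑ t ∈ range (m+1),
          (gammaF μ L1 k t * (α t * (2 - α t*L1)) * Dl t + cstF μ L1 L0 α k t) :=
    Finset.sum_le_sum (fun t _ => gammaF_cost hμ hL1 hk_lo hαid (Dl t) (hDlow t) t)
  rw [Finset.sum_add_distrib] at h1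
  have h2 : ∑ t ∈ range (m+1), gammaF μ L1 k t * (α t * (2 - α t*L1)) * Dl t
      ≤ gammaF μ L1 k 0 * (1 - μ*α 0) * r 0
        + ∑ t ∈ range (m+1), gammaF μ L1 k t * (α t)^2 * L0^2 := by
    have h3 := htele m
    nlinarith [mul_nonneg (gammaF_nonneg (L1 := L1) (k := k) hμ m) (hrnn (m+1))]
  have h3 : gammaF μ L1 k 0 * (1 - μ*α 0) * r 0 ≤ L1^2/(2*μ) * r 0 :=
    mul_le_mul_of_nonneg_right (gammaF_start hμ hαid) (hrnn 0)
  have h4 : ∑ t ∈ range (m+1), gammaF μ L1 k t * (α t)^2 * L0^2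
        + ∑ t ∈ range (m+1), cstF μ L1 L0 α k t
      ≤ ((m+1:ℕ):ℝ) * (2/μ * L0^2) := by
    rw [← Finset.sum_add_distrib]
    calc ∑ t ∈ range (m+1), (gammaF μ L1 k t * (α t)^2 * L0^2 + cstF μ L1 L0 α k t)
        ≤ ∑ _t ∈ range (m+1), (2/μ * L0^2) :=
          Finset.sum_le_sum (fun t _ => gammaF_term hμ hL0 hk_lo hαid t)
      _ = ((m+1:ℕ):ℝ) * (2/μ * L0^2) := by
          rw [Finset.sum_const, card_range]; push_cast; ring
  linarith

end Chain

/-- projection step inequality -/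
lemma proj_step {d : ℕ} (w p y : EuclideanSpace ℝ (Fin d))
    (h : ⟪w - p, y - p⟫ ≤ 0) : ‖p - y‖^2 ≤ ‖w - y‖^2 := by
  have e : w - y = (w - p) + (p - y) := by abel
  have expand : ‖w - y‖^2 = ‖w - p‖^2 + 2*⟪w - p, p - y⟫ + ‖p - y‖^2 := by
    rw [e, norm_add_sq_real]
  have h2 : ⟪w - p, p - y⟫ = -⟪w - p, y - p⟫ := by
    rw [show y - p = -(p - y) by abel, inner_neg_right]; ring
  nlinarith [sq_nonneg ‖w - p‖]

/-- expansion of the gradient step distance -/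
lemma step_expand {d : ℕ} (x g y : EuclideanSpace ℝ (Fin d)) (a : ℝ) :
    ‖(x - a • g) - y‖^2 = ‖x - y‖^2 - 2*a*⟪g, x - y⟫ + a^2*‖g‖^2 := by
  have e : (x - a • g) - y = (x - y) - a • g := by abel
  rw [e, norm_sub_sq_real, real_inner_smul_right, norm_smul, Real.norm_eq_abs, mul_pow,
    sq_abs, real_inner_comm g (x-y)]
  ring

lemma gauss_sum (n : ℕ) : ∑ t ∈ range n, ((t:ℝ)+1) = n*(n+1)/2 := by
  induction n with
  | zero => simp
  | succ m ih => rw [sum_range_succ, ih]; push_cast; ring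

end SwitchingAuxiliary

open SwitchingAuxiliary

set_option maxHeartbeats 1000000 in
/-- Switching subgradient method convergence (Theorem 1). -/
theorem switching_subgradient_convergence {d : ℕ}
    (Z : Set (EuclideanSpace ℝ (Fin d)))
    (hZne : Z.Nonempty) (hZcl : IsClosed Z) (hZconv : Convex ℝ Z)
    (μ τ L0 L1 : ℝ) (hμ : 0 < μ) (hτ : 0 < τ) (hL0 : 0 ≤ L0) (hL1 : 0 ≤ L1)
    (F G : EuclideanSpace ℝ (Fin d) → ℝ)
    (hFconv : ConvexOn ℝ Z F) (hGconv : ConvexOn ℝ Z G)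
    (zs : EuclideanSpace ℝ (Fin d)) (hzs : zs ∈ Z) (hGzs : G zs ≤ 0)
    (α : ℕ → ℝ)
    (hα : ∀ t : ℕ, α t = 2 / (μ * ((t : ℝ) + 2) + L1 ^ 2 / (μ * ((t : ℝ) + 1))))
    (z ζ : ℕ → EuclideanSpace ℝ (Fin d))
    (hzmem : ∀ t, z t ∈ Z) (hGz0 : G (z 0) ≤ τ)
    (hstepF : ∀ t, G (z t) ≤ τ →
      (∀ y ∈ Z, F y ≥ F (z t) + ⟪ζ t, y - z t⟫ + μ / 2 * ‖y - z t‖ ^ 2) ∧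
      ‖ζ t‖ ^ 2 ≤ L0 ^ 2 + L1 * (F (z t) - F zs))
    (hstepG : ∀ t, τ < G (z t) →
      (∀ y ∈ Z, G y ≥ G (z t) + ⟪ζ t, y - z t⟫ + μ / 2 * ‖y - z t‖ ^ 2) ∧
      ‖ζ t‖ ^ 2 ≤ L0 ^ 2 + L1 * (G (z t) - G zs))
    (hproj : ∀ t, ∀ y ∈ Z, ⟪(z t - α t • ζ t) - z (t + 1), y - z (t + 1)⟫ ≤ 0)
    (T : ℕ) (hT1 : 1 ≤ T)
    (hT2 : 8 * L0 ^ 2 / (μ * τ) ≤ (T : ℝ))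
    (hT3 : Real.sqrt (2 * L1 ^ 2 * ‖z 0 - zs‖ ^ 2 / (μ * τ)) ≤ (T : ℝ)) :
    let I := (Finset.range T).filter (fun t => G (z t) ≤ τ)
    let zbar := (∑ t ∈ I, ((t : ℝ) + 1))⁻¹ • ∑ t ∈ I, ((t : ℝ) + 1) • z t
    0 ∈ I ∧ F zbar - F zs ≤ τ ∧ G zbar ≤ τ := by
  intro I zbar
  classical
  have hμτ : (0:ℝ) < μ*τ := mul_pos hμ hτ
  -- α identity
  have hαid : ∀ t : ℕ, α t * (Af μ t*(Af μ t+μ) + L1^2) = 2*Af μ t := by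
    intro t
    have h1 : (0:ℝ) < μ*((t:ℝ)+1) := by positivity
    have hbig : (0:ℝ) < μ * ((t : ℝ) + 2) + L1 ^ 2 / (μ * ((t : ℝ) + 1)) := by positivity
    rw [hα t]
    unfold Af
    rw [div_mul_eq_mul_div, div_eq_iff (ne_of_gt hbig)]
    field_simp
    ring
  -- threshold index
  set k : ℕ := if L1 ≤ μ then 0 else ⌈L1/μ⌉₊ with hk_def
  have hk_hi : ∀ t : ℕ, k ≤ t → L1 ≤ Af μ t := by
    intro t ht
    unfold Af
    by_cases hLμ : L1 ≤ μ
    · have h0 : (0:ℝ) ≤ (t:ℝ) := Nat.cast_nonneg t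
      nlinarith
    · have hk_eq : k = ⌈L1/μ⌉₊ := by rw [hk_def, if_neg hLμ]
      have h1 : L1/μ ≤ (k:ℝ) := by
        rw [hk_eq]; exact_mod_cast Nat.le_ceil _
      have h2 : (k:ℝ) ≤ (t:ℝ) := by exact_mod_cast ht
      rw [div_le_iff₀ hμ] at h1
      nlinarith
  have hk_lo : ∀ t : ℕ, t < k → (0 < L1 ∧ Af μ t ≤ 2*L1) := by
    intro t ht
    have hk0 : k ≠ 0 := by omega
    have hLμ : μ < L1 := by
      by_contra hcon
      push_neg at hcon
      rw [hk_def, if_pos hcon] at hk0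
      exact hk0 rfl
    have hk_eq : k = ⌈L1/μ⌉₊ := by rw [hk_def, if_neg (not_le.mpr hLμ)]
    refine ⟨by linarith, ?_⟩
    unfold Af
    have h1 : (k:ℝ) < L1/μ + 1 := by
      rw [hk_eq]
      exact_mod_cast Nat.ceil_lt_add_one (by positivity : (0:ℝ) ≤ L1/μ)
    have h2 : ((t:ℝ)+1) ≤ (k:ℝ) := by exact_mod_cast ht
    rw [div_add' _ _ _ (ne_of_gt hμ), lt_div_iff₀ hμ] at h1
    nlinarith
  -- sequences
  set Dl : ℕ → ℝ := fun t => if G (z t) ≤ τ then F (z t) - F zs else G (z t) - G zs with hDl_def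
  -- geometry facts
  have hkey : ∀ t : ℕ, (Dl t + μ/2 * ‖z t - zs‖^2 ≤ ⟪ζ t, z t - zs⟫)
      ∧ (‖ζ t‖^2 ≤ L0^2 + L1 * Dl t) := by
    intro t
    by_cases hc : G (z t) ≤ τ
    · obtain ⟨hsub, hnorm⟩ := hstepF t hc
      have h1 := hsub zs hzs
      rw [show zs - z t = -(z t - zs) by abel, inner_neg_right, norm_neg] at h1
      simp only [hDl_def, if_pos hc]
      exact ⟨by linarith, hnorm⟩
    · obtain ⟨hsub, hnorm⟩ := hstepG t (lt_of_not_ge hc)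
      have h1 := hsub zs hzs
      rw [show zs - z t = -(z t - zs) by abel, inner_neg_right, norm_neg] at h1
      simp only [hDl_def, if_neg hc]
      exact ⟨by linarith, hnorm⟩
  have hstep : ∀ t : ℕ,
      ‖z (t+1) - zs‖^2 ≤ ‖z t - zs‖^2 - 2*(α t)*⟪ζ t, z t - zs⟫ + (α t)^2*‖ζ t‖^2 := by
    intro t
    have hp := hproj t zs hzs
    have h1 : ‖z (t+1) - zs‖^2 ≤ ‖(z t - α t • ζ t) - zs‖^2 :=
      proj_step (z t - α t • ζ t) (z (t+1)) zs hp
    rw [step_expand (z t) (ζ t) zs (α t)] at h1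
    exact h1
  -- master bound
  have hmain : ∑ t ∈ range T, ((t:ℝ)+1) * Dl t
      ≤ L1^2/(2*μ) * ‖z 0 - zs‖^2 + (T:ℝ) * (2/μ * L0^2) :=
    master hμ hL1 (by positivity) hk_hi hk_lo hαid
      Dl (fun t => ‖z t - zs‖^2) (fun t => ‖ζ t‖^2) (fun t => ⟪ζ t, z t - zs⟫)
      (fun t => by positivity) (fun t => (hkey t).1) (fun t => (hkey t).2)
      (fun t => by positivity) hstep T hT1
  -- numeric bounds from hT2 and hT3
  have hbound1 : L1^2/(2*μ) * ‖z 0 - zs‖^2 ≤ τ*(T:ℝ)^2/4 := by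
    have h0 : (0:ℝ) ≤ 2*L1^2*‖z 0 - zs‖^2/(μ*τ) := by positivity
    have hX : 2*L1^2*‖z 0 - zs‖^2/(μ*τ) ≤ (T:ℝ)^2 := by
      nlinarith [Real.sq_sqrt h0, Real.sqrt_nonneg (2*L1^2*‖z 0 - zs‖^2/(μ*τ)), hT3]
    rw [div_le_iff₀ hμτ] at hX
    rw [div_mul_eq_mul_div, div_le_div_iff₀ (by positivity) (by norm_num : (0:ℝ) < 4)]
    nlinarith
  have hbound2 : (T:ℝ) * (2/μ * L0^2) ≤ τ*(T:ℝ)^2/4 := by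
    have h8 : 8*L0^2 ≤ (T:ℝ)*(μ*τ) := by
      rw [div_le_iff₀ hμτ] at hT2
      linarith
    have hTnn : (0:ℝ) ≤ (T:ℝ) := Nat.cast_nonneg T
    have e : (T:ℝ) * (2/μ * L0^2) = 2*L0^2*(T:ℝ)/μ := by ring
    rw [e, div_le_div_iff₀ hμ (by norm_num : (0:ℝ) < 4)]
    nlinarith [mul_le_mul_of_nonneg_left h8 hTnn]
  -- split the sum
  have hsplit := Finset.sum_sdiff (f := fun t : ℕ => ((t:ℝ)+1) * Dl t)
    (Finset.filter_subset (fun t => G (z t) ≤ τ) (range T))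
  have hIsum : ∑ t ∈ I, ((t:ℝ)+1) * Dl t = ∑ t ∈ I, ((t:ℝ)+1) * (F (z t) - F zs) := by
    apply Finset.sum_congr rfl
    intro t htI
    have hGt : G (z t) ≤ τ := (Finset.mem_filter.mp htI).2
    simp only [hDl_def, if_pos hGt]
  have hGsum : τ * ∑ t ∈ range T \ I, ((t:ℝ)+1)
      ≤ ∑ t ∈ range T \ I, ((t:ℝ)+1) * Dl t := by
    rw [Finset.mul_sum]
    apply Finset.sum_le_sum
    intro t htI
    have hGt : ¬ (G (z t) ≤ τ) := by
      intro hcon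
      exact (Finset.mem_sdiff.mp htI).2
        (Finset.mem_filter.mpr ⟨(Finset.mem_sdiff.mp htI).1, hcon⟩)
    have hDlt : τ ≤ Dl t := by
      simp only [hDl_def, if_neg hGt]
      push_neg at hGt
      linarith
    have h0 : (0:ℝ) ≤ (t:ℝ)+1 := by positivity
    nlinarith
  -- weights
  set WI : ℝ := ∑ t ∈ I, ((t:ℝ)+1) with hWI_def
  set WG : ℝ := ∑ t ∈ range T \ I, ((t:ℝ)+1) with hWG_def
  have hWsum : WI + WG = (T:ℝ)*((T:ℝ)+1)/2 := by
    rw [hWI_def, hWG_def]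
    rw [add_comm, Finset.sum_sdiff (f := fun t : ℕ => ((t:ℝ)+1))
      (Finset.filter_subset (fun t => G (z t) ≤ τ) (range T))]
    exact gauss_sum T
  have h0I : 0 ∈ I := by
    apply Finset.mem_filter.mpr
    exact ⟨Finset.mem_range.mpr (by omega), hGz0⟩
  have hWIpos : 0 < WI := by
    rw [hWI_def]
    apply Finset.sum_pos' (fun i _ => by positivity)
    exact ⟨0, h0I, by norm_num⟩
  -- final F-sum bound
  have hFsum : ∑ t ∈ I, ((t:ℝ)+1) * (F (z t) - F zs) ≤ τ * WI := by
    have h2 : ∑ t ∈ range T, ((t:ℝ)+1) * Dl t ≤ τ*(T:ℝ)^2/2 := by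
      calc ∑ t ∈ range T, ((t:ℝ)+1) * Dl t
          ≤ L1^2/(2*μ) * ‖z 0 - zs‖^2 + (T:ℝ) * (2/μ * L0^2) := hmain
        _ ≤ τ*(T:ℝ)^2/4 + τ*(T:ℝ)^2/4 := add_le_add hbound1 hbound2
        _ = τ*(T:ℝ)^2/2 := by ring
    have h1 : ∑ t ∈ I, ((t:ℝ)+1) * Dl t ≤ τ*(T:ℝ)^2/2 - τ*WG := by
      have h3 : ∑ t ∈ I, ((t:ℝ)+1) * Dl t
          = ∑ t ∈ range T, ((t:ℝ)+1) * Dl t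
            - ∑ t ∈ range T \ I, ((t:ℝ)+1) * Dl t := by
        rw [← hsplit]; ring
      rw [h3]
      linarith [hGsum]
    rw [← hIsum]
    have hT2' : τ*(T:ℝ)^2/2 ≤ τ*(WI + WG) := by
      rw [hWsum]
      have hTnn : (0:ℝ) ≤ (T:ℝ) := Nat.cast_nonneg T
      nlinarith
    linarith
  -- Jensen
  have hwnn : ∀ i ∈ I, (0:ℝ) ≤ (i:ℝ)+1 := fun i _ => by positivity
  have hmemI : ∀ i ∈ I, z i ∈ Z := fun i _ => hzmem i
  have hWIpos' : 0 < ∑ i ∈ I, ((i:ℝ)+1) := hWIpos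
  have hJF : F zbar ≤ (∑ i ∈ I, ((i:ℝ)+1))⁻¹ * ∑ i ∈ I, ((i:ℝ)+1) * F (z i) := by
    have hj := hFconv.map_centerMass_le hwnn hWIpos' hmemI
    simp only [Finset.centerMass, Function.comp, smul_eq_mul] at hj
    exact hj
  have hJG : G zbar ≤ (∑ i ∈ I, ((i:ℝ)+1))⁻¹ * ∑ i ∈ I, ((i:ℝ)+1) * G (z i) := by
    have hj := hGconv.map_centerMass_le hwnn hWIpos' hmemI
    simp only [Finset.centerMass, Function.comp, smul_eq_mul] at hj
    exact hj
  refine ⟨h0I, ?_, ?_⟩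
  · -- F bound
    have e1 : ∑ i ∈ I, ((i:ℝ)+1) * F (z i)
        = ∑ t ∈ I, ((t:ℝ)+1) * (F (z t) - F zs) + WI * F zs := by
      rw [hWI_def, Finset.sum_mul, ← Finset.sum_add_distrib]
      apply Finset.sum_congr rfl
      intro t _
      ring
    have h2 : F zbar ≤ WI⁻¹ * (τ * WI + WI * F zs) := by
      calc F zbar ≤ (∑ i ∈ I, ((i:ℝ)+1))⁻¹ * ∑ i ∈ I, ((i:ℝ)+1) * F (z i) := hJF
        _ = WI⁻¹ * (∑ t ∈ I, ((t:ℝ)+1) * (F (z t) - F zs) + WI * F zs) := by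
            rw [e1, hWI_def]
        _ ≤ WI⁻¹ * (τ * WI + WI * F zs) := by
            apply mul_le_mul_of_nonneg_left _ (inv_nonneg.mpr hWIpos.le)
            linarith [hFsum]
    have e2 : WI⁻¹ * (τ * WI + WI * F zs) = τ + F zs := by
      field_simp
    rw [e2] at h2
    linarith
  · -- G bound
    have h1 : ∑ i ∈ I, ((i:ℝ)+1) * G (z i) ≤ τ * WI := by
      rw [hWI_def, Finset.mul_sum]
      apply Finset.sum_le_sum
      intro t htI
      have hGt : G (z t) ≤ τ := (Finset.mem_filter.mp htI).2
      have h0 : (0:ℝ) ≤ (t:ℝ)+1 := by positivity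
      nlinarith
    have h2 : G zbar ≤ WI⁻¹ * (τ * WI) := by
      calc G zbar ≤ (∑ i ∈ I, ((i:ℝ)+1))⁻¹ * ∑ i ∈ I, ((i:ℝ)+1) * G (z i) := hJG
        _ ≤ WI⁻¹ * (τ * WI) := by
            apply mul_le_mul_of_nonneg_left h1 (inv_nonneg.mpr hWIpos.le)
    have e2 : WI⁻¹ * (τ * WI) = τ := by field_simp
    rw [e2] at h2
    exact h2
end

section
/- One-step contraction inequality for a projected subgradient step under the non-Lipschitz subgradient bound. Let Z ⊆ ℝ^d be nonempty, closed and convex, let μ > 0, α ≥ 0, L₀ ≥ 0, L₁ ≥ 0, let z, z* ∈ Z, and let F : ℝ^d → ℝ. Suppose ζ ∈ ℝ^d is a μ-strong subgradient of F at z over Z and ‖ζ‖² ≤ L₀² + L₁(F(z) − F(z*)). Then the point z⁺ = proj_Z(z − αζ) satisfies ‖z⁺ − z*‖² ≤ (1 − μα)‖z − z*‖² − (2α − L₁α²)(F(z) − F(z*)) + L₀²α². -/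
open RealInnerProductSpace

/-- One-step contraction inequality for a projected subgradient step
under the non-Lipschitz subgradient bound. -/
theorem one_step_contraction {d : ℕ}
    (Z : Set (EuclideanSpace ℝ (Fin d)))
    (hZne : Z.Nonempty) (hZcl : IsClosed Z) (hZconv : Convex ℝ Z)
    (μ α L0 L1 : ℝ) (hμ : 0 < μ) (hα : 0 ≤ α) (hL0 : 0 ≤ L0) (hL1 : 0 ≤ L1)
    (z zs : EuclideanSpace ℝ (Fin d)) (hz : z ∈ Z) (hzs : zs ∈ Z)
    (F : EuclideanSpace ℝ (Fin d) → ℝ)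
    (ζ : EuclideanSpace ℝ (Fin d))
    (hζsub : ∀ y ∈ Z, F y ≥ F z + ⟪ζ, y - z⟫ + μ / 2 * ‖y - z‖ ^ 2)
    (hζbd : ‖ζ‖ ^ 2 ≤ L0 ^ 2 + L1 * (F z - F zs))
    (zp : EuclideanSpace ℝ (Fin d)) (hzp : zp ∈ Z)
    (hproj : ∀ y ∈ Z, ⟪(z - α • ζ) - zp, y - zp⟫ ≤ 0) :
    ‖zp - zs‖ ^ 2 ≤ (1 - μ * α) * ‖z - zs‖ ^ 2
      - (2 * α - L1 * α ^ 2) * (F z - F zs) + L0 ^ 2 * α ^ 2 := by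
  set w := z - α • ζ with hw
  have h1 : ⟪w - zp, zs - zp⟫ ≤ 0 := hproj zs hzs
  have h2 := hζsub zs hzs
  -- ‖zp - zs‖² ≤ ‖w - zs‖²
  have e1 : ‖w - zs‖ ^ 2 = ‖w - zp‖ ^ 2 + 2 * ⟪w - zp, zp - zs⟫ + ‖zp - zs‖ ^ 2 := by
    have := @norm_add_sq_real (EuclideanSpace ℝ (Fin d)) _ _ (w - zp) (zp - zs)
    rw [show (w - zp) + (zp - zs) = w - zs by abel] at this
    linarith
  have hflip : ⟪w - zp, zp - zs⟫ = - ⟪w - zp, zs - zp⟫ := by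
    rw [← inner_neg_right]; congr 1; abel
  have step1 : ‖zp - zs‖ ^ 2 ≤ ‖w - zs‖ ^ 2 := by
    nlinarith [sq_nonneg ‖w - zp‖]
  -- expand ‖w - zs‖²
  have e2 : ‖w - zs‖ ^ 2 = ‖z - zs‖ ^ 2 - 2 * (α * ⟪z - zs, ζ⟫) + α ^ 2 * ‖ζ‖ ^ 2 := by
    have := @norm_sub_sq_real (EuclideanSpace ℝ (Fin d)) _ _ (z - zs) (α • ζ)
    rw [show (z - zs) - α • ζ = w - zs by rw [hw]; abel] at this
    rw [this, inner_smul_right, norm_smul]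
    simp [mul_pow, abs_mul_abs_self, sq_abs]
  -- subgradient inequality: ⟪ζ, zs - z⟫ = -⟪z - zs, ζ⟫ after symmetry
  have e3 : ⟪ζ, zs - z⟫ = - ⟪z - zs, ζ⟫ := by
    rw [real_inner_comm, ← inner_neg_left]; congr 1; abel
  have e4 : ‖zs - z‖ = ‖z - zs‖ := norm_sub_rev _ _
  rw [e3, e4] at h2
  -- combine
  have hαζ : α ^ 2 * ‖ζ‖ ^ 2 ≤ α ^ 2 * (L0 ^ 2 + L1 * (F z - F zs)) :=
    mul_le_mul_of_nonneg_left hζbd (sq_nonneg α)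
  nlinarith [mul_le_mul_of_nonneg_left (show F z - F zs + μ / 2 * ‖z - zs‖ ^ 2 ≤ ⟪z - zs, ζ⟫ by linarith) hα]
end

section
/- Summed weighted gap bound for the switching subgradient iteration. Let Z ⊆ ℝ^d be nonempty, closed and convex, let μ > 0, τ > 0, L₀ ≥ 0, L₁ ≥ 0, let F, G : ℝ^d → ℝ, and let z* ∈ Z. Define α_t = 2/(μ(t+2) + L₁²/(μ(t+1))). Suppose sequences z : ℕ → Z and ζ : ℕ → ℝ^d satisfy, for every t ∈ ℕ: if G(z_t) ≤ τ then ζ_t is a μ-strong subgradient of F at z_t over Z with ‖ζ_t‖² ≤ L₀² + L₁(F(z_t) − F(z*)), while if G(z_t) > τ then ζ_t is a μ-strong subgradient of G at z_t over Z with ‖ζ_t‖² ≤ L₀² + L₁(G(z_t) − G(z*)); and z_{t+1} = proj_Z(z_t − α_t ζ_t). Then for every T ∈ ℕ, Σ_{t < T, G(z_t) ≤ τ} (t+1)(F(z_t) − F(z*)) + Σ_{t < T, G(z_t) > τ} (t+1)(G(z_t) − G(z*)) ≤ 2L₀²T/μ + L₁²‖z₀ − z*‖²/(2μ). -/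
open RealInnerProductSpace Finset

set_option maxHeartbeats 1000000 in
private lemma core_scalar (μ L0 L1 a h g q D D' : ℝ) (hμ : 0 < μ) (hL1 : 0 ≤ L1)
    (ha : 0 < a) (hg0 : 0 ≤ g) (hD0 : 0 ≤ D)
    (hq : h + μ / 2 * D ≤ q) (hgb : g ≤ L0 ^ 2 + L1 * h)
    (hrec : D' ≤ D - 2 * (2 / (a + μ + L1 ^ 2 / a)) * q + (2 / (a + μ + L1 ^ 2 / a)) ^ 2 * g) :
    4 * (a * h) + (a + μ + L1 ^ 2 / a) * (a + min a (2 * L1)) * D' ≤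
      (a + μ + L1 ^ 2 / a - 2 * μ) * (a + min a (2 * L1)) * D + 8 * L0 ^ 2 := by
  set s : ℝ := L1 ^ 2 / a with hs_def
  have hs0 : 0 ≤ s := by rw [hs_def]; exact div_nonneg (sq_nonneg _) ha.le
  have hsa : s * a = L1 ^ 2 := by rw [hs_def]; exact div_mul_cancel₀ _ ha.ne'
  set n : ℝ := min a (2 * L1) with hn_def
  have hn0 : 0 ≤ n := le_min ha.le (by linarith)
  have hna : n ≤ a := min_le_left _ _
  have hn1 : n ≤ 2 * L1 := min_le_right _ _
  set K : ℝ := a + μ + s with hK_def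
  have hK0 : 0 < K := by rw [hK_def]; linarith
  have h2L1 : 2 * L1 ≤ a + s := by nlinarith [sq_nonneg (a - L1)]
  have hcneg : (a + n) * L1 ≤ n * K := by
    rcases le_total a (2 * L1) with hc | hc
    · have hn' : n = a := by rw [hn_def, min_eq_left hc]
      rw [hn', hK_def]; nlinarith [mul_le_mul_of_nonneg_left h2L1 ha.le, mul_pos hμ ha]
    · have hn' : n = 2 * L1 := by rw [hn_def, min_eq_right hc]
      rw [hn', hK_def]
      nlinarith [mul_le_mul_of_nonneg_right h2L1 hL1, mul_nonneg hs0 hL1,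
        mul_nonneg hμ.le hL1]
  have hL0h : 0 ≤ L0 ^ 2 + L1 * h := le_trans hg0 hgb
  have h2K : a + n ≤ 2 * K := by rw [hK_def]; linarith
  have hstar : ((a + n) * L1 - n * K) * h ≤ L0 ^ 2 * (2 * K - a - n) := by
    rcases le_or_gt 0 h with hh | hh
    · have h1 : ((a + n) * L1 - n * K) * h ≤ 0 :=
        mul_nonpos_of_nonpos_of_nonneg (by linarith) hh
      have h2 : 0 ≤ L0 ^ 2 * (2 * K - a - n) := mul_nonneg (sq_nonneg _) (by linarith)
      linarith
    · nlinarith [mul_nonneg (mul_nonneg (by linarith : (0:ℝ) ≤ 2 * L1 - n) hK0.le)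
        (by linarith : (0:ℝ) ≤ -h),
        mul_nonneg (by linarith : (0:ℝ) ≤ 2 * K - a - n) hL0h]
  have hKne : K ≠ 0 := ne_of_gt hK0
  have hrec' : K ^ 2 * D' ≤ K ^ 2 * D - 4 * K * q + 4 * g := by
    have h1 : K ^ 2 * D' ≤ K ^ 2 * (D - 2 * (2 / K) * q + (2 / K) ^ 2 * g) :=
      mul_le_mul_of_nonneg_left hrec (by positivity)
    have h2 : K ^ 2 * (D - 2 * (2 / K) * q + (2 / K) ^ 2 * g)
        = K ^ 2 * D - 4 * K * q + 4 * g := by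
      field_simp
      ring
    rw [h2] at h1
    exact h1
  have H1 : (a + n) * (K ^ 2 * D') ≤ (a + n) * (K ^ 2 * D - 4 * K * q + 4 * g) :=
    mul_le_mul_of_nonneg_left hrec' (by linarith)
  have H2 : (4 * K * (a + n)) * (h + μ / 2 * D) ≤ (4 * K * (a + n)) * q :=
    mul_le_mul_of_nonneg_left hq
      (mul_nonneg (by linarith : (0:ℝ) ≤ 4 * K) (by linarith : (0:ℝ) ≤ a + n))
  have H3 : (4 * (a + n)) * g ≤ (4 * (a + n)) * (L0 ^ 2 + L1 * h) :=
    mul_le_mul_of_nonneg_left hgb (by linarith)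
  refine le_of_mul_le_mul_left ?_ hK0
  nlinarith [H1, H2, H3, hstar, hK0, hn0, ha]

private lemma telescope_scalar (μ L1 a b : ℝ) (hμ : 0 < μ) (hL1 : 0 ≤ L1) (hb : 0 < b)
    (hab : a = b + μ) :
    (a + μ + L1 ^ 2 / a - 2 * μ) * (a + min a (2 * L1)) ≤
      (b + μ + L1 ^ 2 / b) * (b + min b (2 * L1)) := by
  subst hab
  have ha : 0 < b + μ := by linarith
  have hs1 : (L1 ^ 2 / (b + μ)) * (b + μ) = L1 ^ 2 := div_mul_cancel₀ _ ha.ne'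
  have hs2 : (L1 ^ 2 / b) * b = L1 ^ 2 := div_mul_cancel₀ _ hb.ne'
  have hs'0 : 0 ≤ L1 ^ 2 / (b + μ) := div_nonneg (sq_nonneg _) ha.le
  have hs0 : 0 ≤ L1 ^ 2 / b := div_nonneg (sq_nonneg _) hb.le
  have hmono : L1 ^ 2 / (b + μ) ≤ L1 ^ 2 / b := by
    nlinarith [hs1, hs2, mul_nonneg hs'0 hμ.le]
  rcases le_total (2 * L1) b with h1 | h1
  · rw [min_eq_right h1, min_eq_right (by linarith : 2 * L1 ≤ b + μ)]
    have hmul : (L1 ^ 2 / (b + μ)) * L1 ≤ (μ + L1 ^ 2 / b) * L1 :=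
      mul_le_mul_of_nonneg_right (by linarith) hL1
    nlinarith [hs1, hs2, hmul]
  · rcases le_total (2 * L1) (b + μ) with h2 | h2
    · rw [min_eq_left h1, min_eq_right h2]
      have hbs' : (0:ℝ) ≤ b + L1 ^ 2 / (b + μ) := by linarith
      nlinarith [hs1, hs2, mul_le_mul_of_nonneg_left h2 hbs']
    · rw [min_eq_left h1, min_eq_left h2]
      nlinarith [hs1, hs2]

/-- Summed weighted gap bound for the switching subgradient iteration. -/
theorem summed_weighted_gap_bound {d : ℕ}
    (Z : Set (EuclideanSpace ℝ (Fin d)))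
    (hZne : Z.Nonempty) (hZcl : IsClosed Z) (hZconv : Convex ℝ Z)
    (μ τ L0 L1 : ℝ) (hμ : 0 < μ) (hτ : 0 < τ) (hL0 : 0 ≤ L0) (hL1 : 0 ≤ L1)
    (F G : EuclideanSpace ℝ (Fin d) → ℝ)
    (zs : EuclideanSpace ℝ (Fin d)) (hzs : zs ∈ Z)
    (α : ℕ → ℝ)
    (hα : ∀ t : ℕ, α t = 2 / (μ * ((t : ℝ) + 2) + L1 ^ 2 / (μ * ((t : ℝ) + 1))))
    (z ζ : ℕ → EuclideanSpace ℝ (Fin d))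
    (hzmem : ∀ t, z t ∈ Z)
    (hstepF : ∀ t, G (z t) ≤ τ →
      (∀ y ∈ Z, F y ≥ F (z t) + ⟪ζ t, y - z t⟫ + μ / 2 * ‖y - z t‖ ^ 2) ∧
      ‖ζ t‖ ^ 2 ≤ L0 ^ 2 + L1 * (F (z t) - F zs))
    (hstepG : ∀ t, τ < G (z t) →
      (∀ y ∈ Z, G y ≥ G (z t) + ⟪ζ t, y - z t⟫ + μ / 2 * ‖y - z t‖ ^ 2) ∧
      ‖ζ t‖ ^ 2 ≤ L0 ^ 2 + L1 * (G (z t) - G zs))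
    (hproj : ∀ t, ∀ y ∈ Z, ⟪(z t - α t • ζ t) - z (t + 1), y - z (t + 1)⟫ ≤ 0)
    (T : ℕ) :
    ∑ t ∈ (Finset.range T).filter (fun t => G (z t) ≤ τ),
        ((t : ℝ) + 1) * (F (z t) - F zs)
      + ∑ t ∈ (Finset.range T).filter (fun t => τ < G (z t)),
          ((t : ℝ) + 1) * (G (z t) - G zs)
      ≤ 2 * L0 ^ 2 * (T : ℝ) / μ + L1 ^ 2 * ‖z 0 - zs‖ ^ 2 / (2 * μ) := by
  classical
  set gap : ℕ → ℝ := fun t => if G (z t) ≤ τ then F (z t) - F zs else G (z t) - G zs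
    with hgap
  have hsub : ∀ t : ℕ, gap t + μ / 2 * ‖z t - zs‖ ^ 2 ≤ ⟪ζ t, z t - zs⟫ ∧
      ‖ζ t‖ ^ 2 ≤ L0 ^ 2 + L1 * gap t := by
    intro t
    have einner : ⟪ζ t, zs - z t⟫ = -⟪ζ t, z t - zs⟫ := by
      rw [show zs - z t = -(z t - zs) by abel, inner_neg_right]
    have enorm : ‖zs - z t‖ = ‖z t - zs‖ := norm_sub_rev _ _
    by_cases hc : G (z t) ≤ τ
    · have H := (hstepF t hc).1 zs hzs
      have H2 := (hstepF t hc).2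
      rw [einner, enorm] at H
      have hg : gap t = F (z t) - F zs := by rw [hgap]; simp [hc]
      constructor
      · rw [hg]; linarith
      · rw [hg]; exact H2
    · have hc' : τ < G (z t) := lt_of_not_ge hc
      have H := (hstepG t hc').1 zs hzs
      have H2 := (hstepG t hc').2
      rw [einner, enorm] at H
      have hg : gap t = G (z t) - G zs := by rw [hgap]; simp [hc]
      constructor
      · rw [hg]; linarith
      · rw [hg]; exact H2
  have key : ∀ t : ℕ, ‖z (t + 1) - zs‖ ^ 2 ≤
      ‖z t - zs‖ ^ 2 - 2 * α t * ⟪ζ t, z t - zs⟫ + (α t) ^ 2 * ‖ζ t‖ ^ 2 := by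
    intro t
    have hp := hproj t zs hzs
    have e1 : ‖(z t - α t • ζ t) - zs‖ ^ 2
        = ‖z t - zs‖ ^ 2 - 2 * α t * ⟪ζ t, z t - zs⟫ + (α t) ^ 2 * ‖ζ t‖ ^ 2 := by
      rw [show (z t - α t • ζ t) - zs = (z t - zs) - α t • ζ t by abel]
      rw [norm_sub_sq_real, real_inner_smul_right, norm_smul]
      rw [real_inner_comm]
      simp only [Real.norm_eq_abs, mul_pow, sq_abs]
      ring
    have e2 : ‖(z t - α t • ζ t) - zs‖ ^ 2
        = ‖(z t - α t • ζ t) - z (t + 1)‖ ^ 2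
          + 2 * ⟪(z t - α t • ζ t) - z (t + 1), z (t + 1) - zs⟫
          + ‖z (t + 1) - zs‖ ^ 2 := by
      rw [show (z t - α t • ζ t) - zs
          = ((z t - α t • ζ t) - z (t + 1)) + (z (t + 1) - zs) by abel]
      rw [norm_add_sq_real]
    have e3 : 0 ≤ ⟪(z t - α t • ζ t) - z (t + 1), z (t + 1) - zs⟫ := by
      have e : z (t + 1) - zs = -(zs - z (t + 1)) := by abel
      rw [e, inner_neg_right]
      linarith
    nlinarith [sq_nonneg ‖(z t - α t • ζ t) - z (t + 1)‖, e1, e2, e3]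
  have step : ∀ t : ℕ,
      4 * (μ * ((t : ℝ) + 1) * gap t)
        + (μ * ((t : ℝ) + 1) + μ + L1 ^ 2 / (μ * ((t : ℝ) + 1)))
            * (μ * ((t : ℝ) + 1) + min (μ * ((t : ℝ) + 1)) (2 * L1)) * ‖z (t + 1) - zs‖ ^ 2
      ≤ (μ * ((t : ℝ) + 1) + μ + L1 ^ 2 / (μ * ((t : ℝ) + 1)) - 2 * μ)
            * (μ * ((t : ℝ) + 1) + min (μ * ((t : ℝ) + 1)) (2 * L1)) * ‖z t - zs‖ ^ 2
          + 8 * L0 ^ 2 := by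
    intro t
    have hrect : ‖z (t + 1) - zs‖ ^ 2 ≤ ‖z t - zs‖ ^ 2
        - 2 * (2 / (μ * ((t : ℝ) + 1) + μ + L1 ^ 2 / (μ * ((t : ℝ) + 1)))) * ⟪ζ t, z t - zs⟫
        + (2 / (μ * ((t : ℝ) + 1) + μ + L1 ^ 2 / (μ * ((t : ℝ) + 1)))) ^ 2 * ‖ζ t‖ ^ 2 := by
      have e : μ * ((t : ℝ) + 2) + L1 ^ 2 / (μ * ((t : ℝ) + 1))
          = μ * ((t : ℝ) + 1) + μ + L1 ^ 2 / (μ * ((t : ℝ) + 1)) := by ring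
      have hαt : α t = 2 / (μ * ((t : ℝ) + 1) + μ + L1 ^ 2 / (μ * ((t : ℝ) + 1))) := by
        rw [hα t, e]
      rw [← hαt]
      exact key t
    exact core_scalar μ L0 L1 (μ * ((t : ℝ) + 1)) (gap t) (‖ζ t‖ ^ 2) (⟪ζ t, z t - zs⟫)
      (‖z t - zs‖ ^ 2) (‖z (t + 1) - zs‖ ^ 2) hμ hL1
      (mul_pos hμ (by positivity)) (sq_nonneg _) (sq_nonneg _) (hsub t).1 (hsub t).2 hrect
  set NN : ℕ → ℝ := fun S => if S = 0 then 2 * L1 ^ 2 else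
    (μ * (((S - 1 : ℕ) : ℝ) + 1) + μ + L1 ^ 2 / (μ * (((S - 1 : ℕ) : ℝ) + 1)))
      * (μ * (((S - 1 : ℕ) : ℝ) + 1) + min (μ * (((S - 1 : ℕ) : ℝ) + 1)) (2 * L1))
    with hNN
  have hNN0 : NN 0 = 2 * L1 ^ 2 := by simp [hNN]
  have hNNsucc : ∀ k : ℕ, NN (k + 1)
      = (μ * ((k : ℝ) + 1) + μ + L1 ^ 2 / (μ * ((k : ℝ) + 1)))
          * (μ * ((k : ℝ) + 1) + min (μ * ((k : ℝ) + 1)) (2 * L1)) := by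
    intro k
    simp [hNN]
  have hNNnonneg : ∀ S : ℕ, 0 ≤ NN S := by
    intro S
    cases S with
    | zero => rw [hNN0]; positivity
    | succ k =>
      rw [hNNsucc k]
      have h1 : (0:ℝ) ≤ μ * ((k : ℝ) + 1) := (mul_pos hμ (by positivity)).le
      have h2 : (0:ℝ) ≤ L1 ^ 2 / (μ * ((k : ℝ) + 1)) := div_nonneg (sq_nonneg _) h1
      have h3 : (0:ℝ) ≤ min (μ * ((k : ℝ) + 1)) (2 * L1) := le_min h1 (by linarith)
      nlinarith
  have htel : ∀ k : ℕ,
      (μ * ((k : ℝ) + 1) + μ + L1 ^ 2 / (μ * ((k : ℝ) + 1)) - 2 * μ)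
        * (μ * ((k : ℝ) + 1) + min (μ * ((k : ℝ) + 1)) (2 * L1)) ≤ NN k := by
    intro k
    cases k with
    | zero =>
      rw [hNN0]
      norm_num
      have h1 : L1 ^ 2 / μ * μ = L1 ^ 2 := div_mul_cancel₀ _ hμ.ne'
      have h2 : min μ (2 * L1) ≤ μ := min_le_left _ _
      have h3 : (0:ℝ) ≤ L1 ^ 2 / μ := div_nonneg (sq_nonneg _) hμ.le
      have h4 : (0:ℝ) ≤ min μ (2 * L1) := le_min hμ.le (by linarith)
      nlinarith [h1, h2, h3, h4]
    | succ j =>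
      rw [hNNsucc j]
      apply telescope_scalar μ L1 _ _ hμ hL1 (mul_pos hμ (by positivity))
      push_cast
      ring
  have inv : ∀ S : ℕ, 4 * μ * (∑ t ∈ Finset.range S, ((t : ℝ) + 1) * gap t)
      + NN S * ‖z S - zs‖ ^ 2 ≤ 8 * L0 ^ 2 * (S : ℝ) + 2 * L1 ^ 2 * ‖z 0 - zs‖ ^ 2 := by
    intro S
    induction S with
    | zero =>
      rw [hNN0]
      simp
    | succ k ih =>
      rw [Finset.sum_range_succ, hNNsucc k]
      have hstepk := step k
      have htelk := mul_le_mul_of_nonneg_right (htel k) (sq_nonneg ‖z k - zs‖)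
      push_cast
      linarith [ih, hstepk, htelk]
  have hfin := inv T
  have hpos := mul_nonneg (hNNnonneg T) (sq_nonneg ‖z T - zs‖)
  have hsplit : ∑ t ∈ (Finset.range T).filter (fun t => G (z t) ≤ τ),
        ((t : ℝ) + 1) * (F (z t) - F zs)
      + ∑ t ∈ (Finset.range T).filter (fun t => τ < G (z t)),
          ((t : ℝ) + 1) * (G (z t) - G zs)
      = ∑ t ∈ Finset.range T, ((t : ℝ) + 1) * gap t := by
    rw [← Finset.sum_filter_add_sum_filter_not (Finset.range T) (fun t => G (z t) ≤ τ)
      (fun t => ((t : ℝ) + 1) * gap t)]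
    congr 1
    · refine Finset.sum_congr rfl (fun t ht => ?_)
      have hc := (Finset.mem_filter.mp ht).2
      rw [hgap]
      simp [hc]
    · have e : (Finset.range T).filter (fun t => τ < G (z t))
          = (Finset.range T).filter (fun t => ¬ G (z t) ≤ τ) := by
        ext x
        simp [Finset.mem_filter, not_le]
      rw [e]
      refine Finset.sum_congr rfl (fun t ht => ?_)
      have hc := (Finset.mem_filter.mp ht).2
      rw [hgap]
      simp [hc]
  rw [hsplit]
  have h4μ : (0:ℝ) < 4 * μ := by linarith
  have hRHS : 4 * μ * (2 * L0 ^ 2 * (T : ℝ) / μ + L1 ^ 2 * ‖z 0 - zs‖ ^ 2 / (2 * μ))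
      = 8 * L0 ^ 2 * (T : ℝ) + 2 * L1 ^ 2 * ‖z 0 - zs‖ ^ 2 := by
    field_simp
    ring
  refine le_of_mul_le_mul_left ?_ h4μ
  rw [hRHS]
  linarith [hfin, hpos]
end

section
/- Non-Lipschitz subgradient bounds for the proximal subproblem (Lemma 2). Let X ⊆ ℝ^d be convex, let M ≥ 0, ρ̂ > 0, g_lb ∈ ℝ, and let f, g : ℝ^d → ℝ be M-Lipschitz on X with g(x) ≥ g_lb for all x ∈ X. Let x_k ∈ X satisfy g(x_k) ≤ 0, define F_k(x) = f(x) + (ρ̂/2)‖x − x_k‖² and G_k(x) = g(x) + (ρ̂/2)‖x − x_k‖², and let z* ∈ X satisfy F_k(z*) ≤ F_k(x_k) and G_k(z*) ≤ 0. Set L₀² = 9M² − 6ρ̂·g_lb and L₁ = 6ρ̂. Then: (i) for every z ∈ X and every ζ ∈ ℝ^d with ‖ζ‖ ≤ M, one has ‖ζ + ρ̂(z − x_k)‖² ≤ L₀² + L₁(F_k(z) − F_k(z*)); and (ii) for every z ∈ X and every ζ ∈ ℝ^d with ‖ζ‖ ≤ M, one has ‖ζ + ρ̂(z − x_k)‖²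 ≤ L₀² + L₁(G_k(z) − G_k(z*)). -/
/-- Non-Lipschitz subgradient bounds for the proximal subproblem (Lemma 2). -/
theorem nonlipschitz_subgradient_bounds {d : ℕ}
    (X : Set (EuclideanSpace ℝ (Fin d))) (hX : Convex ℝ X)
    (M ρ' glb : ℝ) (hM : 0 ≤ M) (hρ' : 0 < ρ')
    (f g : EuclideanSpace ℝ (Fin d) → ℝ)
    (hfLip : ∀ x ∈ X, ∀ y ∈ X, |f x - f y| ≤ M * ‖x - y‖)
    (hgLip : ∀ x ∈ X, ∀ y ∈ X, |g x - g y| ≤ M * ‖x - y‖)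
    (hglb : ∀ x ∈ X, glb ≤ g x)
    (xk : EuclideanSpace ℝ (Fin d)) (hxk : xk ∈ X) (hgxk : g xk ≤ 0)
    (Fk Gk : EuclideanSpace ℝ (Fin d) → ℝ)
    (hFk : ∀ x, Fk x = f x + ρ' / 2 * ‖x - xk‖ ^ 2)
    (hGk : ∀ x, Gk x = g x + ρ' / 2 * ‖x - xk‖ ^ 2)
    (zs : EuclideanSpace ℝ (Fin d)) (hzs : zs ∈ X)
    (hFzs : Fk zs ≤ Fk xk) (hGzs : Gk zs ≤ 0)
    (L0sq L1 : ℝ) (hL0sq : L0sq = 9 * M ^ 2 - 6 * ρ' * glb) (hL1 : L1 = 6 * ρ') :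
    (∀ z ∈ X, ∀ ζ : EuclideanSpace ℝ (Fin d), ‖ζ‖ ≤ M →
      ‖ζ + ρ' • (z - xk)‖ ^ 2 ≤ L0sq + L1 * (Fk z - Fk zs)) ∧
    (∀ z ∈ X, ∀ ζ : EuclideanSpace ℝ (Fin d), ‖ζ‖ ≤ M →
      ‖ζ + ρ' • (z - xk)‖ ^ 2 ≤ L0sq + L1 * (Gk z - Gk zs)) := by
  have hglb0 : glb ≤ 0 := le_trans (hglb xk hxk) hgxk
  constructor
  · intro z hz ζ hζ
    have hr : (0:ℝ) ≤ ‖z - xk‖ := norm_nonneg _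
    have hrs : (0:ℝ) ≤ ‖zs - xk‖ := norm_nonneg _
    have htri : ‖ζ + ρ' • (z - xk)‖ ≤ M + ρ' * ‖z - xk‖ := by
      calc ‖ζ + ρ' • (z - xk)‖ ≤ ‖ζ‖ + ‖ρ' • (z - xk)‖ := norm_add_le _ _
        _ ≤ M + ρ' * ‖z - xk‖ := by
          rw [norm_smul, Real.norm_eq_abs, abs_of_pos hρ']
          linarith
    have hsq : ‖ζ + ρ' • (z - xk)‖ ^ 2 ≤ (M + ρ' * ‖z - xk‖) ^ 2 :=
      pow_le_pow_left₀ (norm_nonneg _) htri 2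
    have h1 : f zs + ρ' / 2 * ‖zs - xk‖ ^ 2 ≤ f xk := by
      have h := hFzs
      rw [hFk zs, hFk xk] at h
      simpa using h
    have h2 : -(M * ‖z - xk‖) ≤ f z - f xk := by
      have h := abs_le.mp (hfLip z hz xk hxk)
      linarith [h.1]
    rw [hFk z, hFk zs, hL0sq, hL1]
    nlinarith [sq_nonneg (2 * M - ρ' * ‖z - xk‖), sq_nonneg (‖zs - xk‖),
      mul_nonneg hρ'.le (sq_nonneg ‖zs - xk‖), mul_nonneg hρ'.le (neg_nonneg.mpr hglb0)]
  · intro z hz ζ hζ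
    have hr : (0:ℝ) ≤ ‖z - xk‖ := norm_nonneg _
    have htri : ‖ζ + ρ' • (z - xk)‖ ≤ M + ρ' * ‖z - xk‖ := by
      calc ‖ζ + ρ' • (z - xk)‖ ≤ ‖ζ‖ + ‖ρ' • (z - xk)‖ := norm_add_le _ _
        _ ≤ M + ρ' * ‖z - xk‖ := by
          rw [norm_smul, Real.norm_eq_abs, abs_of_pos hρ']
          linarith
    have hsq : ‖ζ + ρ' • (z - xk)‖ ^ 2 ≤ (M + ρ' * ‖z - xk‖) ^ 2 :=
      pow_le_pow_left₀ (norm_nonneg _) htri 2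
    have h1 : glb ≤ g z := hglb z hz
    rw [hGk z, hL0sq, hL1]
    nlinarith [sq_nonneg (M - ρ' * ‖z - xk‖), mul_pos hρ' hρ', hGzs,
      mul_nonneg hρ'.le (sub_nonneg.mpr h1)]
end

section
/- Corollary 1: complexity of the switching subgradient method on the proximal subproblem. Let X ⊆ ℝ^d be nonempty, closed and convex, let M ≥ 0, g_lb ≤ 0, ρ ≥ 0, ρ̂ > ρ, μ = ρ̂ − ρ, and τ > 0. Let f, g : ℝ^d → ℝ be M-Lipschitz and ρ-weakly convex on X, with g(x) ≥ g_lb for all x ∈ X. Let x_k ∈ X satisfy g(x_k) ≤ 0, define F_k(x) = f(x) + (ρ̂/2)‖x − x_k‖² and G_k(x) = g(x) + (ρ̂/2)‖x − x_k‖², and let z* ∈ X satisfy G_k(z*) ≤ 0 and F_k(z*) ≤ F_k(x_k). Define α_t = 2/(μ(t+2) + 36ρ̂²/(μ(t+1))). Suppose sequences z : ℕ → X and ζ : ℕ → ℝ^d satisfy z₀ = x_k and, for every t: if G_k(z_t) ≤ τ then ζ_t is a μ-strong subgradient of F_k at z_t over X of the form ζ_t = ξ_t + ρ̂(z_t − x_k)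 with ‖ξ_t‖ ≤ M, while if G_k(z_t) > τ then ζ_t is a μ-strong subgradient of G_k at z_t over X of the form ζ_t = ξ_t + ρ̂(z_t − x_k) with ‖ξ_t‖ ≤ M; and z_{t+1} = proj_X(z_t − α_t ζ_t). Then for every natural number T ≥ 1 with T ≥ 24(3M² − 2ρ̂·g_lb)/(μτ) and T ≥ sqrt(72ρ̂²D²/(μτ)) where D = sqrt(−8g_lb/μ), the set I = {t : t < T, G_k(z_t) ≤ τ} contains 0 and the weighted average z̄_T = (Σ_{t∈I}(t+1)z_t)/(Σ_{t∈I}(t+1)) satisfies F_k(z̄_T) − F_k(z*) ≤ τ and G_k(z̄_T) ≤ τ. -/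
open RealInnerProductSpace Finset
set_option maxHeartbeats 2000000

lemma gauss_sum_aux : ∀ n : ℕ, ∑ t ∈ Finset.range n, ((t:ℝ)+1) = n*(n+1)/2 := by
  intro n
  induction n with
  | zero => simp
  | succ n ih => rw [Finset.sum_range_succ, ih]; push_cast; ring

lemma convexOn_const_mul_norm_sub_sq {E : Type*} [NormedAddCommGroup E] [NormedSpace ℝ E]
    (s : Set E) (hs : Convex ℝ s) (c : ℝ) (hc : 0 ≤ c) (v : E) :
    ConvexOn ℝ s (fun x => c * ‖x - v‖^2) := by
  refine ⟨hs, fun x hx y hy a b ha hb hab => ?_⟩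
  have h1 : a • x + b • y - v = a • (x - v) + b • (y - v) := by
    have hv : a • v + b • v = v := by rw [← add_smul, hab, one_smul]
    rw [smul_sub, smul_sub]
    nth_rewrite 1 [← hv]
    abel
  simp only [smul_eq_mul, h1]
  have h2 : ‖a • (x - v) + b • (y - v)‖ ≤ a * ‖x - v‖ + b * ‖y - v‖ := by
    refine (norm_add_le _ _).trans ?_
    simp [norm_smul, abs_of_nonneg ha, abs_of_nonneg hb]
  have h3 : (0:ℝ) ≤ ‖a • (x - v) + b • (y - v)‖ := norm_nonneg _
  have h4 := pow_le_pow_left₀ h3 h2 2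
  have key : a*‖x-v‖^2 + b*‖y-v‖^2 - (a*‖x-v‖ + b*‖y-v‖)^2
      = a*b*(‖x-v‖ - ‖y-v‖)^2 := by
    have hb' : b = 1 - a := by linarith
    rw [hb']; ring
  nlinarith [mul_le_mul_of_nonneg_left h4 hc,
    mul_nonneg hc (mul_nonneg (mul_nonneg ha hb) (sq_nonneg (‖x-v‖ - ‖y-v‖))),
    mul_nonneg hc (sq_nonneg (a*‖x-v‖ + b*‖y-v‖))]

/-- Corollary 1: complexity of the switching subgradient method
on the proximal subproblem. -/
theorem switching_subgradient_proximal_subproblem {d : ℕ}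
    (X : Set (EuclideanSpace ℝ (Fin d)))
    (hXne : X.Nonempty) (hXcl : IsClosed X) (hXconv : Convex ℝ X)
    (M glb ρ ρ' μ τ : ℝ) (hM : 0 ≤ M) (hglb : glb ≤ 0) (hρ : 0 ≤ ρ)
    (hρρ' : ρ < ρ') (hμ : μ = ρ' - ρ) (hτ : 0 < τ)
    (f g : EuclideanSpace ℝ (Fin d) → ℝ)
    (hfLip : ∀ x ∈ X, ∀ y ∈ X, |f x - f y| ≤ M * ‖x - y‖)
    (hgLip : ∀ x ∈ X, ∀ y ∈ X, |g x - g y| ≤ M * ‖x - y‖)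
    (hfwc : ConvexOn ℝ X (fun x => f x + ρ / 2 * ‖x‖ ^ 2))
    (hgwc : ConvexOn ℝ X (fun x => g x + ρ / 2 * ‖x‖ ^ 2))
    (hgbd : ∀ x ∈ X, glb ≤ g x)
    (xk : EuclideanSpace ℝ (Fin d)) (hxk : xk ∈ X) (hgxk : g xk ≤ 0)
    (Fk Gk : EuclideanSpace ℝ (Fin d) → ℝ)
    (hFk : ∀ x, Fk x = f x + ρ' / 2 * ‖x - xk‖ ^ 2)
    (hGk : ∀ x, Gk x = g x + ρ' / 2 * ‖x - xk‖ ^ 2)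
    (zs : EuclideanSpace ℝ (Fin d)) (hzs : zs ∈ X)
    (hGzs : Gk zs ≤ 0) (hFzs : Fk zs ≤ Fk xk)
    (α : ℕ → ℝ)
    (hα : ∀ t : ℕ, α t = 2 / (μ * ((t : ℝ) + 2) + 36 * ρ' ^ 2 / (μ * ((t : ℝ) + 1))))
    (z ζ : ℕ → EuclideanSpace ℝ (Fin d))
    (hzmem : ∀ t, z t ∈ X) (hz0 : z 0 = xk)
    (hstepF : ∀ t, Gk (z t) ≤ τ →
      (∀ y ∈ X, Fk y ≥ Fk (z t) + ⟪ζ t, y - z t⟫ + μ / 2 * ‖y - z t‖ ^ 2) ∧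
      ∃ ξ : EuclideanSpace ℝ (Fin d), ζ t = ξ + ρ' • (z t - xk) ∧ ‖ξ‖ ≤ M)
    (hstepG : ∀ t, τ < Gk (z t) →
      (∀ y ∈ X, Gk y ≥ Gk (z t) + ⟪ζ t, y - z t⟫ + μ / 2 * ‖y - z t‖ ^ 2) ∧
      ∃ ξ : EuclideanSpace ℝ (Fin d), ζ t = ξ + ρ' • (z t - xk) ∧ ‖ξ‖ ≤ M)
    (hproj : ∀ t, ∀ y ∈ X, ⟪(z t - α t • ζ t) - z (t + 1), y - z (t + 1)⟫ ≤ 0)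
    (T : ℕ) (hT1 : 1 ≤ T)
    (hT2 : 24 * (3 * M ^ 2 - 2 * ρ' * glb) / (μ * τ) ≤ (T : ℝ))
    (hT3 : Real.sqrt (72 * ρ' ^ 2 * Real.sqrt (-8 * glb / μ) ^ 2 / (μ * τ)) ≤ (T : ℝ)) :
    let I := (Finset.range T).filter (fun t => Gk (z t) ≤ τ)
    let zbar := (∑ t ∈ I, ((t : ℝ) + 1))⁻¹ • ∑ t ∈ I, ((t : ℝ) + 1) • z t
    0 ∈ I ∧ Fk zbar - Fk zs ≤ τ ∧ Gk zbar ≤ τ := by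
  intro I zbar
  have hIdef : I = (Finset.range T).filter (fun t => Gk (z t) ≤ τ) := rfl
  have μpos : 0 < μ := by rw [hμ]; linarith
  have hμne : μ ≠ 0 := ne_of_gt μpos
  have ρ'pos : 0 < ρ' := lt_of_le_of_lt hρ hρρ'
  have hμρ' : μ ≤ ρ' := by rw [hμ]; linarith
  have hρ'eq : ρ' = μ + ρ := by rw [hμ]; ring
  have hTR : (1:ℝ) ≤ (T:ℝ) := by exact_mod_cast hT1
  -- α facts
  have hden : ∀ t : ℕ, 0 < μ * ((t:ℝ)+2) + 36*ρ'^2/(μ*((t:ℝ)+1)) := by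
    intro t
    have h1 : (0:ℝ) < μ*((t:ℝ)+1) := mul_pos μpos (by positivity)
    have h2 : (0:ℝ) < μ*((t:ℝ)+2) := mul_pos μpos (by positivity)
    have h3 : (0:ℝ) ≤ 36*ρ'^2/(μ*((t:ℝ)+1)) := le_of_lt (div_pos (by positivity) h1)
    linarith
  have hαpos : ∀ t, 0 < α t := by
    intro t; rw [hα]; exact div_pos (by norm_num) (hden t)
  have h6 : ∀ t, α t * (6*ρ') ≤ 1 := by
    intro t
    rw [hα]
    have h1 : (0:ℝ) < μ*((t:ℝ)+1) := mul_pos μpos (by positivity)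
    rw [div_mul_eq_mul_div, div_le_one (hden t)]
    have key : (12*ρ' - μ*((t:ℝ)+2)) * (μ*((t:ℝ)+1)) ≤ 36*ρ'^2 := by
      nlinarith [sq_nonneg (μ*((t:ℝ)+1) - 6*ρ'), mul_pos μpos h1, h1, μpos,
        mul_nonneg μpos.le (Nat.cast_nonneg t : (0:ℝ) ≤ (t:ℝ))]
    have h2 : 12*ρ' - μ*((t:ℝ)+2) ≤ 36*ρ'^2/(μ*((t:ℝ)+1)) := by
      rw [le_div_iff₀ h1]; exact key
    linarith
  have hα2 : ∀ t : ℕ, ((t:ℝ)+1) * α t ≤ 2/μ := by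
    intro t
    rw [hα, show ((t:ℝ)+1)*(2/(μ * ((t:ℝ)+2) + 36*ρ'^2/(μ*((t:ℝ)+1)))) =
      (2*((t:ℝ)+1))/(μ * ((t:ℝ)+2) + 36*ρ'^2/(μ*((t:ℝ)+1))) from by ring]
    rw [div_le_div_iff₀ (hden t) μpos]
    have h1 : (0:ℝ) < μ*((t:ℝ)+1) := mul_pos μpos (by positivity)
    have h3 : (0:ℝ) ≤ 36*ρ'^2/(μ*((t:ℝ)+1)) := le_of_lt (div_pos (by positivity) h1)
    nlinarith [μpos, h3]
  -- the weight function
  set c : ℕ → ℝ := fun n => μ*(n:ℝ)*((n:ℝ)+1)/4 + 9*ρ'^2/μ with hcdef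
  have hc1 : ∀ t : ℕ, c (t+1) = μ*((t:ℝ)+1)*((t:ℝ)+2)/4 + 9*ρ'^2/μ := by
    intro t; simp only [hcdef]; push_cast; ring
  have hcnn : ∀ n : ℕ, 0 ≤ c n := by
    intro n
    simp only [hcdef]
    have h1 : (0:ℝ) ≤ μ*(n:ℝ)*((n:ℝ)+1)/4 := by
      apply div_nonneg _ (by norm_num)
      exact mul_nonneg (mul_nonneg μpos.le (Nat.cast_nonneg n)) (by positivity)
    have h2 : (0:ℝ) ≤ 9*ρ'^2/μ := le_of_lt (div_pos (by positivity) μpos)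
    linarith
  have e1 : ∀ t : ℕ, 2 * α t * c (t+1) = (t:ℝ)+1 := by
    intro t
    rw [hc1, hα]
    have h1 : (μ*((t:ℝ)+1)) ≠ 0 := ne_of_gt (mul_pos μpos (by positivity))
    have h2 : (μ * ((t:ℝ)+2) + 36*ρ'^2/(μ*((t:ℝ)+1))) ≠ 0 := ne_of_gt (hden t)
    field_simp
    ring
  -- descent inequality
  have hdesc : ∀ t, ‖z (t+1) - zs‖^2 ≤ ‖z t - zs‖^2 - 2*(α t)*⟪ζ t, z t - zs⟫
      + (α t)^2*‖ζ t‖^2 := by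
    intro t
    have hp := hproj t zs hzs
    have hid : ‖(z t - α t • ζ t) - zs‖^2 = ‖(z t - α t • ζ t) - z (t+1)‖^2
        + 2*⟪(z t - α t • ζ t) - z (t+1), z (t+1) - zs⟫ + ‖z (t+1) - zs‖^2 := by
      have h := norm_add_sq_real ((z t - α t • ζ t) - z (t+1)) (z (t+1) - zs)
      rw [sub_add_sub_cancel] at h
      exact h
    have h2 : ⟪(z t - α t • ζ t) - z (t+1), zs - z (t+1)⟫
        = -⟪(z t - α t • ζ t) - z (t+1), z (t+1) - zs⟫ := by
      rw [← inner_neg_right, neg_sub]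
    have h4 : ‖(z t - α t • ζ t) - zs‖^2
        = ‖z t - zs‖^2 - 2*(α t)*⟪ζ t, z t - zs⟫ + (α t)^2*‖ζ t‖^2 := by
      have e : (z t - α t • ζ t) - zs = (z t - zs) - α t • ζ t := by
        rw [sub_right_comm]
      rw [e, norm_sub_sq_real, real_inner_smul_right, norm_smul,
        mul_pow, Real.norm_eq_abs, sq_abs, real_inner_comm]
      ring
    linarith [sq_nonneg ‖(z t - α t • ζ t) - z (t+1)‖, hp, hid.ge, hid.le, h2.ge, h2.le, h4.le, h4.ge]
  -- bound on subgradient norm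
  have hζb : ∀ t (ξ : EuclideanSpace ℝ (Fin d)), ζ t = ξ + ρ' • (z t - xk) → ‖ξ‖ ≤ M →
      ‖ζ t‖^2 ≤ 2*M^2 + 2*ρ'^2*‖z t - xk‖^2 := by
    intro t ξ hform hξ
    have h1 : ‖ζ t‖ ≤ M + ρ' * ‖z t - xk‖ := by
      rw [hform]
      refine (norm_add_le _ _).trans ?_
      rw [norm_smul, Real.norm_eq_abs, abs_of_pos ρ'pos]
      exact add_le_add hξ le_rfl
    nlinarith [pow_le_pow_left₀ (norm_nonneg (ζ t)) h1 2,
      sq_nonneg (M - ρ'*‖z t - xk‖)]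
  -- the per-step "gap"
  set gap : ℕ → ℝ := fun t => if Gk (z t) ≤ τ then Fk (z t) - Fk zs else τ with hgapdef
  -- the key one-step inequality
  have hstar : ∀ t, ‖z (t+1) - zs‖^2 ≤ (1 - μ*(α t))*‖z t - zs‖^2 - 2*(α t)*(gap t)
      + (α t)^2*(2*M^2 - 4*ρ'*glb) + 2/3*τ*(α t) := by
    intro t
    have hd := hdesc t
    have hA := hαpos t
    have h6t := h6 t
    have hρ'A : (0:ℝ) ≤ ρ' * α t := mul_nonneg ρ'pos.le hA.le
    have hd4 : 4*ρ'*τ*(α t)^2 ≤ 2/3*τ*(α t) := by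
      nlinarith [mul_le_mul_of_nonneg_left h6t
        (by positivity : (0:ℝ) ≤ 2/3*τ*(α t))]
    have hGt : Gk (z t) = g (z t) + ρ'/2*‖z t - xk‖^2 := hGk (z t)
    have hglbz := hgbd (z t) (hzmem t)
    by_cases hc : Gk (z t) ≤ τ
    · have hgt : gap t = Fk (z t) - Fk zs := by simp only [hgapdef, if_pos hc]
      rw [hgt]
      obtain ⟨ξ, hform, hξM⟩ := (hstepF t hc).2
      have hζ2 := hζb t ξ hform hξM
      have hsub := (hstepF t hc).1 zs hzs
      rw [show ⟪ζ t, zs - z t⟫ = -⟪ζ t, z t - zs⟫ from by rw [← inner_neg_right, neg_sub],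
        norm_sub_rev zs (z t)] at hsub
      have hs2 : ρ' * ‖z t - xk‖^2 ≤ 2*(τ - glb) := by
        rw [hGt] at hc; linarith
      have h_a : 2*(α t)*((Fk (z t) - Fk zs) + μ/2*‖z t - zs‖^2) ≤ 2*(α t)*⟪ζ t, z t - zs⟫ := by
        apply mul_le_mul_of_nonneg_left _ (by positivity)
        linarith
      have h_b : (α t)^2*‖ζ t‖^2 ≤ (α t)^2*(2*M^2 + 2*ρ'^2*‖z t - xk‖^2) :=
        mul_le_mul_of_nonneg_left hζ2 (sq_nonneg _)
      have h_c : 2*ρ'*(α t)^2*(ρ'*‖z t - xk‖^2) ≤ 2*ρ'*(α t)^2*(2*(τ-glb)) :=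
        mul_le_mul_of_nonneg_left hs2 (by positivity)
      nlinarith [hd, h_a, h_b, h_c, hd4]
    · have hgt : gap t = τ := by simp only [hgapdef, if_neg hc]
      rw [hgt]
      have hc' : τ < Gk (z t) := lt_of_not_ge hc
      obtain ⟨ξ, hform, hξM⟩ := (hstepG t hc').2
      have hζ2 := hζb t ξ hform hξM
      have hsub := (hstepG t hc').1 zs hzs
      rw [show ⟪ζ t, zs - z t⟫ = -⟪ζ t, z t - zs⟫ from by rw [← inner_neg_right, neg_sub],
        norm_sub_rev zs (z t)] at hsub
      have h_a : 2*(α t)*(Gk (z t) + μ/2*‖z t - zs‖^2) ≤ 2*(α t)*⟪ζ t, z t - zs⟫ := by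
        apply mul_le_mul_of_nonneg_left _ (by positivity)
        linarith
      have h_b : (α t)^2*‖ζ t‖^2 ≤ (α t)^2*(2*M^2 + 2*ρ'^2*‖z t - xk‖^2) :=
        mul_le_mul_of_nonneg_left hζ2 (sq_nonneg _)
      have h_e : 0 ≤ 2*(α t)*(1 - 2*(ρ'*α t))*(Gk (z t) - τ) := by
        apply mul_nonneg (mul_nonneg (by linarith) _) (by linarith)
        nlinarith [h6t, hρ'A]
      have h_f : 0 ≤ 4*ρ'*(α t)^2*(Gk (z t) - glb - ρ'/2*‖z t - xk‖^2) := by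
        apply mul_nonneg (by positivity)
        rw [hGt]; linarith
      nlinarith [hd, h_a, h_b, h_e, h_f, hd4]
  -- weighted one-step inequality
  have hwstep : ∀ t : ℕ, ((t:ℝ)+1)*(gap t) + c (t+1) * ‖z (t+1) - zs‖^2
      ≤ c t * ‖z t - zs‖^2 + ((t:ℝ)+1)*(α t)*(M^2 - 2*ρ'*glb) + ((t:ℝ)+1)*τ/3 := by
    intro t
    have he1 := e1 t
    have hct : c t = c (t+1) - μ*((t:ℝ)+1)/2 := by
      rw [hc1]; simp only [hcdef]; ring
    have hexp : ((t:ℝ)+1)*(gap t) + c (t+1) * ‖z (t+1) - zs‖^2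
        - (c t * ‖z t - zs‖^2 + ((t:ℝ)+1)*(α t)*(M^2 - 2*ρ'*glb) + ((t:ℝ)+1)*τ/3)
        = c (t+1) * (‖z (t+1) - zs‖^2 - ((1 - μ*(α t))*‖z t - zs‖^2 - 2*(α t)*(gap t)
          + (α t)^2*(2*M^2 - 4*ρ'*glb) + 2/3*τ*(α t))) := by
      rw [hct]
      linear_combination (-(gap t) - μ/2*‖z t - zs‖^2 + (α t)*(M^2 - 2*ρ'*glb) + τ/3) * he1
    have hP : ‖z (t+1) - zs‖^2 - ((1 - μ*(α t))*‖z t - zs‖^2 - 2*(α t)*(gap t)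
        + (α t)^2*(2*M^2 - 4*ρ'*glb) + 2/3*τ*(α t)) ≤ 0 := sub_nonpos.mpr (hstar t)
    have hnp := mul_nonpos_iff.mpr (Or.inr ⟨hP, hcnn (t+1)⟩)
    linarith [hexp.le, hexp.ge, hnp]
  -- telescoping
  have hind : ∀ n : ℕ, (∑ t ∈ Finset.range n, ((t:ℝ)+1)*(gap t)) + c n * ‖z n - zs‖^2
      ≤ c 0 * ‖z 0 - zs‖^2
        + ∑ t ∈ Finset.range n, (((t:ℝ)+1)*(α t)*(M^2 - 2*ρ'*glb) + ((t:ℝ)+1)*τ/3) := by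
    intro n
    induction n with
    | zero => simp
    | succ n ih =>
      rw [Finset.sum_range_succ, Finset.sum_range_succ]
      have hw := hwstep n
      linarith
  -- bound c 0 * r0^2
  have hc0 : c 0 = 9*ρ'^2/μ := by simp [hcdef]
  have hr0 : ρ' * ‖zs - xk‖^2 ≤ -2*glb := by
    have h1 := hGk zs
    rw [h1] at hGzs
    have h2 := hgbd zs hzs
    linarith
  have hz0n : ‖z 0 - zs‖ = ‖zs - xk‖ := by rw [hz0, norm_sub_rev]
  have hE : (0:ℝ) ≤ -8*glb/μ := div_nonneg (by linarith) μpos.le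
  rw [Real.sq_sqrt hE] at hT3
  have hμτ : 0 < μ*τ := mul_pos μpos hτ
  have hEnn : 0 ≤ 72*ρ'^2*(-8*glb/μ)/(μ*τ) :=
    div_nonneg (mul_nonneg (by positivity) hE) hμτ.le
  have hT3' : 72*ρ'^2*(-8*glb/μ)/(μ*τ) ≤ (T:ℝ)^2 := by
    nlinarith [Real.sq_sqrt hEnn, Real.sqrt_nonneg (72*ρ'^2*(-8*glb/μ)/(μ*τ)), hT3]
  rw [div_le_iff₀ hμτ] at hT3'
  rw [show 72*ρ'^2*(-8*glb/μ) = (-576*ρ'^2*glb)/μ from by ring] at hT3'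
  rw [div_le_iff₀ μpos] at hT3'
  have hB1 : c 0 * ‖z 0 - zs‖^2 ≤ τ*(T:ℝ)^2/32 := by
    rw [hc0, hz0n]
    rw [div_mul_eq_mul_div, div_le_div_iff₀ μpos (by norm_num : (0:ℝ) < 32)]
    have k1 : (-576*glb*ρ')*ρ' ≤ (τ*(T:ℝ)^2*μ)*ρ' := by
      nlinarith [hT3', mul_nonneg (mul_nonneg (sq_nonneg (T:ℝ)) hμτ.le)
        (sub_nonneg.mpr hμρ')]
    have k2 := le_of_mul_le_mul_right k1 ρ'pos
    nlinarith [k2, mul_le_mul_of_nonneg_left hr0 (by positivity : (0:ℝ) ≤ 288*ρ')]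
  -- bound the noise sum
  have hK : 0 ≤ M^2 - 2*ρ'*glb := by
    nlinarith [sq_nonneg M, mul_nonneg ρ'pos.le (neg_nonneg.mpr hglb)]
  rw [div_le_iff₀ hμτ] at hT2
  have hB2 : ∑ t ∈ Finset.range T, (((t:ℝ)+1)*(α t)*(M^2 - 2*ρ'*glb) + ((t:ℝ)+1)*τ/3)
      ≤ τ*(T:ℝ)^2/12 + τ*(T:ℝ)*((T:ℝ)+1)/6 := by
    have h1 : ∑ t ∈ Finset.range T, ((t:ℝ)+1)*(α t)*(M^2 - 2*ρ'*glb)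
        ≤ ∑ _t ∈ Finset.range T, (2/μ)*(M^2 - 2*ρ'*glb) :=
      Finset.sum_le_sum (fun i _ => mul_le_mul_of_nonneg_right (hα2 i) hK)
    rw [Finset.sum_const, Finset.card_range, nsmul_eq_mul] at h1
    have h2 : (T:ℝ) * ((2/μ)*(M^2 - 2*ρ'*glb)) ≤ τ*(T:ℝ)^2/12 := by
      rw [show (T:ℝ)*((2/μ)*(M^2 - 2*ρ'*glb)) = (2*(T:ℝ)*(M^2 - 2*ρ'*glb))/μ from by ring,
        div_le_div_iff₀ μpos (by norm_num : (0:ℝ) < 12)]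
      nlinarith [mul_le_mul_of_nonneg_right hT2 (le_trans zero_le_one hTR),
        sq_nonneg M, hTR, mul_nonneg (mul_nonneg ρ'pos.le (neg_nonneg.mpr hglb)) (le_trans zero_le_one hTR)]
    have h3 : ∑ t ∈ Finset.range T, ((t:ℝ)+1)*τ/3 = τ*(T:ℝ)*((T:ℝ)+1)/6 := by
      have : ∀ t : ℕ, ((t:ℝ)+1)*τ/3 = ((t:ℝ)+1)*(τ/3) := fun t => by ring
      simp_rw [this]
      rw [← Finset.sum_mul, gauss_sum_aux]
      ring
    rw [Finset.sum_add_distrib, h3]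
    linarith
  -- total bound
  have hcT := mul_nonneg (hcnn T) (sq_nonneg ‖z T - zs‖)
  have htotal : ∑ t ∈ Finset.range T, ((t:ℝ)+1)*(gap t)
      ≤ τ*(T:ℝ)^2/32 + τ*(T:ℝ)^2/12 + τ*(T:ℝ)*((T:ℝ)+1)/6 := by
    have h0 := hind T
    have h2 : (∑ t ∈ Finset.range T, ((t:ℝ)+1)*(gap t))
        ≤ c 0 * ‖z 0 - zs‖^2 + ∑ t ∈ Finset.range T, (((t:ℝ)+1)*(α t)*(M^2 - 2*ρ'*glb) + ((t:ℝ)+1)*τ/3) :=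
      le_trans (le_add_of_nonneg_right hcT) h0
    have h3 := le_trans h2 (add_le_add hB1 hB2)
    linarith only [h3]
  -- membership of 0
  have hG0 : Gk (z 0) ≤ τ := by
    rw [hz0, hGk]
    simp only [sub_self, norm_zero]
    norm_num
    linarith
  have h0I : 0 ∈ I := by
    rw [hIdef]
    exact Finset.mem_filter.mpr ⟨Finset.mem_range.mpr hT1, hG0⟩
  -- weight sum
  set W : ℝ := ∑ t ∈ I, ((t:ℝ)+1) with hWdef
  have hW1 : 1 ≤ W := by
    have := Finset.single_le_sum (f := fun t : ℕ => (t:ℝ)+1)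
      (fun i _ => by positivity) h0I
    simpa using this
  have hWpos : (0:ℝ) < W := lt_of_lt_of_le zero_lt_one hW1
  -- splitting the sum
  have hsplit := Finset.sum_filter_add_sum_filter_not (Finset.range T)
    (fun t => Gk (z t) ≤ τ) (fun t => ((t:ℝ)+1)*(gap t))
  have hIgap : ∑ t ∈ I, ((t:ℝ)+1)*(gap t)
      = ∑ t ∈ I, ((t:ℝ)+1)*(Fk (z t) - Fk zs) := by
    refine Finset.sum_congr rfl (fun i hi => ?_)
    rw [hIdef] at hi
    simp only [hgapdef, if_pos (Finset.mem_filter.mp hi).2]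
  have hJgap : ∑ t ∈ (Finset.range T).filter (fun t => ¬ Gk (z t) ≤ τ), ((t:ℝ)+1)*(gap t)
      = (∑ t ∈ (Finset.range T).filter (fun t => ¬ Gk (z t) ≤ τ), ((t:ℝ)+1))*τ := by
    rw [Finset.sum_mul]
    refine Finset.sum_congr rfl (fun i hi => ?_)
    simp only [hgapdef, if_neg (Finset.mem_filter.mp hi).2]
  have hwsplit := Finset.sum_filter_add_sum_filter_not (Finset.range T)
    (fun t => Gk (z t) ≤ τ) (fun t => ((t:ℝ)+1))
  rw [gauss_sum_aux] at hwsplit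
  -- conclude the bound on the weighted Fk-gap sum over I
  set J2 : ℝ := ∑ t ∈ (Finset.range T).filter (fun t => ¬ Gk (z t) ≤ τ), ((t:ℝ)+1) with hJ2def
  have hSgapI : ∑ t ∈ I, ((t:ℝ)+1)*(Fk (z t) - Fk zs) ≤ W*τ := by
    have hS1 : (∑ t ∈ I, ((t:ℝ)+1)*(gap t))
        + ∑ t ∈ (Finset.range T).filter (fun t => ¬ Gk (z t) ≤ τ), ((t:ℝ)+1)*(gap t)
        = ∑ t ∈ Finset.range T, ((t:ℝ)+1)*(gap t) := hsplit
    have hS2 : W + J2 = (T:ℝ)*((T:ℝ)+1)/2 := hwsplit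
    have hS2τ : (W + J2)*τ = (T:ℝ)*((T:ℝ)+1)/2*τ := by rw [hS2]
    have hJg : ∑ t ∈ (Finset.range T).filter (fun t => ¬ Gk (z t) ≤ τ), ((t:ℝ)+1)*(gap t)
        = J2*τ := hJgap
    have hτT2 : 0 ≤ τ*(T:ℝ)^2 := mul_nonneg hτ.le (sq_nonneg _)
    have hτT : 0 ≤ τ*(T:ℝ) := mul_nonneg hτ.le (Nat.cast_nonneg T)
    linarith only [hS1, hS2τ, hJg, hIgap, htotal, hτT2, hτT]
  have hSF : ∑ t ∈ I, ((t:ℝ)+1)*(Fk (z t)) ≤ W*(Fk zs + τ) := by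
    have hsub : ∑ t ∈ I, ((t:ℝ)+1)*(Fk (z t) - Fk zs)
        = (∑ t ∈ I, ((t:ℝ)+1)*Fk (z t)) - W*Fk zs := by
      rw [hWdef, Finset.sum_mul, ← Finset.sum_sub_distrib]
      exact Finset.sum_congr rfl (fun i _ => by ring)
    linarith [hSgapI]
  have hSG : ∑ t ∈ I, ((t:ℝ)+1)*(Gk (z t)) ≤ W*τ := by
    rw [hWdef, Finset.sum_mul]
    refine Finset.sum_le_sum (fun i hi => ?_)
    rw [hIdef] at hi
    exact mul_le_mul_of_nonneg_left (Finset.mem_filter.mp hi).2 (by positivity)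
  -- convexity of Fk and Gk on X
  have hconvAux : ∀ (h : EuclideanSpace ℝ (Fin d) → ℝ),
      ConvexOn ℝ X (fun x => h x + ρ / 2 * ‖x‖ ^ 2) →
      ConvexOn ℝ X (fun x => h x + ρ'/2*‖x - xk‖^2) := by
    intro h hwc
    have hcm := (convexOn_const_mul_norm_sub_sq X hXconv (μ/2) (by linarith) ((ρ'/μ) • xk)).add_const
      (ρ'/2*‖xk‖^2 - μ/2*‖(ρ'/μ) • xk‖^2)
    have hsum := hwc.add hcm
    have heq : ((fun x => h x + ρ / 2 * ‖x‖ ^ 2)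
        + ((fun x => μ/2*‖x - (ρ'/μ) • xk‖^2) + fun _ => ρ'/2*‖xk‖^2 - μ/2*‖(ρ'/μ) • xk‖^2))
        = fun x => h x + ρ'/2*‖x - xk‖^2 := by
      funext x
      simp only [Pi.add_apply]
      rw [norm_sub_sq_real x xk, norm_sub_sq_real x ((ρ'/μ) • xk), real_inner_smul_right]
      rw [hρ'eq]
      field_simp
      ring
    rwa [heq] at hsum
  have hFconv : ConvexOn ℝ X Fk := by
    have := hconvAux f hfwc
    have heq : (fun x => f x + ρ'/2*‖x - xk‖^2) = Fk := by
      funext x; rw [hFk x]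
    rwa [heq] at this
  have hGconv : ConvexOn ℝ X Gk := by
    have := hconvAux g hgwc
    have heq : (fun x => g x + ρ'/2*‖x - xk‖^2) = Gk := by
      funext x; rw [hGk x]
    rwa [heq] at this
  -- Jensen
  have hzbar : zbar = I.centerMass (fun t => (t:ℝ)+1) z := rfl
  have hnn : ∀ i ∈ I, (0:ℝ) ≤ (i:ℝ)+1 := fun i _ => by positivity
  have hWpos' : (0:ℝ) < ∑ i ∈ I, ((i:ℝ)+1) := hWpos
  have hcmF : Fk zbar ≤ W⁻¹ * ∑ t ∈ I, ((t:ℝ)+1) * Fk (z t) := by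
    have hj := hFconv.map_centerMass_le hnn hWpos' (fun i _ => hzmem i)
    rw [← hzbar] at hj
    refine hj.trans (le_of_eq ?_)
    simp [Finset.centerMass, hWdef, Finset.smul_sum, smul_eq_mul, Function.comp]
  have hcmG : Gk zbar ≤ W⁻¹ * ∑ t ∈ I, ((t:ℝ)+1) * Gk (z t) := by
    have hj := hGconv.map_centerMass_le hnn hWpos' (fun i _ => hzmem i)
    rw [← hzbar] at hj
    refine hj.trans (le_of_eq ?_)
    simp [Finset.centerMass, hWdef, Finset.smul_sum, smul_eq_mul, Function.comp]
  refine ⟨h0I, ?_, ?_⟩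
  · have h1 : W⁻¹ * ∑ t ∈ I, ((t:ℝ)+1) * Fk (z t) ≤ W⁻¹ * (W*(Fk zs + τ)) :=
      mul_le_mul_of_nonneg_left hSF (inv_nonneg.mpr hWpos.le)
    rw [← mul_assoc, inv_mul_cancel₀ (ne_of_gt hWpos), one_mul] at h1
    linarith [hcmF]
  · have h1 : W⁻¹ * ∑ t ∈ I, ((t:ℝ)+1) * Gk (z t) ≤ W⁻¹ * (W*τ) :=
      mul_le_mul_of_nonneg_left hSG (inv_nonneg.mpr hWpos.le)
    rw [← mul_assoc, inv_mul_cancel₀ (ne_of_gt hWpos), one_mul] at h1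
    linarith [hcmG]
end

section
/- Lemma 1, KKT part: near proximal points are approximate KKT points. Let X ⊆ ℝ^d be convex, let ρ̂ > 1, ε > 0, let f, g : ℝ^d → ℝ, let x_k ∈ X, and define F_k(x) = f(x) + (ρ̂/2)‖x − x_k‖² and G_k(x) = g(x) + (ρ̂/2)‖x − x_k‖². Suppose x̂ ∈ X, λ ≥ 0, vectors ζ_F, ζ_G ∈ ℝ^d, and ν ∈ N_X(x̂) satisfy ζ_F + λζ_G + ν = 0, λ·G_k(x̂) = 0, and G_k(x̂) ≤ 0. If ‖x̂ − x_k‖ ≤ ε/(ρ̂(1+λ)), then, setting ζ_f = ζ_F − ρ̂(x̂ − x_k) and ζ_g = ζ_G − ρ̂(x̂ − x_k): (i) g(x̂) ≤ 0; (ii) ‖ζ_f + λζ_g + ν‖ ≤ ε; (iii) |λ·g(x̂)| ≤ ε²; and (iv) ‖x_k − x̂‖ ≤ ε. -/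
open RealInnerProductSpace

/-- Lemma 1, KKT part: near proximal points are approximate KKT points. -/
theorem near_proximal_is_approx_KKT {d : ℕ}
    (X : Set (EuclideanSpace ℝ (Fin d))) (hX : Convex ℝ X)
    (ρ' ε : ℝ) (hρ' : 1 < ρ') (hε : 0 < ε)
    (f g : EuclideanSpace ℝ (Fin d) → ℝ)
    (xk : EuclideanSpace ℝ (Fin d)) (hxk : xk ∈ X)
    (Fk Gk : EuclideanSpace ℝ (Fin d) → ℝ)
    (hFk : ∀ x, Fk x = f x + ρ' / 2 * ‖x - xk‖ ^ 2)
    (hGk : ∀ x, Gk x = g x + ρ' / 2 * ‖x - xk‖ ^ 2)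
    (xh : EuclideanSpace ℝ (Fin d)) (hxh : xh ∈ X)
    (lam : ℝ) (hlam : 0 ≤ lam)
    (ζF ζG ν : EuclideanSpace ℝ (Fin d))
    (hν : ∀ y ∈ X, ⟪ν, y - xh⟫ ≤ 0)
    (heq : ζF + lam • ζG + ν = 0)
    (hcomp : lam * Gk xh = 0) (hGxh : Gk xh ≤ 0)
    (hnear : ‖xh - xk‖ ≤ ε / (ρ' * (1 + lam))) :
    g xh ≤ 0 ∧
    ‖(ζF - ρ' • (xh - xk)) + lam • (ζG - ρ' • (xh - xk)) + ν‖ ≤ ε ∧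
    |lam * g xh| ≤ ε ^ 2 ∧
    ‖xk - xh‖ ≤ ε := by
  have hr : (0:ℝ) ≤ ‖xh - xk‖ := norm_nonneg _
  set r := ‖xh - xk‖ with hrdef
  have hpos : 0 < ρ' * (1 + lam) := by nlinarith
  have hnear' : ρ' * (1 + lam) * r ≤ ε := by
    have := (le_div_iff₀ hpos).mp hnear
    nlinarith
  have hG := hGk xh
  constructor
  · nlinarith [sq_nonneg r]
  refine ⟨?_, ?_, ?_⟩
  · have hkey : (ζF - ρ' • (xh - xk)) + lam • (ζG - ρ' • (xh - xk)) + ν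
        = -((ρ' * (1 + lam)) • (xh - xk)) := by
      have : (ζF - ρ' • (xh - xk)) + lam • (ζG - ρ' • (xh - xk)) + ν
          = (ζF + lam • ζG + ν) - (ρ' * (1 + lam)) • (xh - xk) := by
        simp [smul_sub, smul_smul]
        module
      rw [this, heq]
      simp
    rw [hkey, norm_neg, norm_smul]
    calc ‖ρ' * (1 + lam)‖ * r = ρ' * (1 + lam) * r := by
          rw [Real.norm_eq_abs, abs_of_pos hpos]
      _ ≤ ε := hnear'
  · have hgval : lam * g xh = -(lam * (ρ' / 2 * r ^ 2)) := by nlinarith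
    rw [hgval, abs_neg, abs_of_nonneg (by positivity)]
    have h2 : (ρ' * (1 + lam) * r) ^ 2 ≤ ε ^ 2 :=
      pow_le_pow_left₀ (by positivity) hnear' 2
    have hfact : 0 ≤ (ρ' * (1 + lam)) ^ 2 - lam * ρ' / 2 := by nlinarith [sq_nonneg lam]
    have h3 : lam * (ρ' / 2 * r ^ 2) ≤ (ρ' * (1 + lam) * r) ^ 2 := by
      nlinarith [mul_nonneg (sq_nonneg r) hfact]
    linarith
  · rw [norm_sub_rev]
    have : 0 ≤ (ρ' * (1 + lam) - 1) * r := by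
      apply mul_nonneg (by nlinarith) hr
    nlinarith
end

section
/- Proximity of near-optimal subproblem solutions to the exact proximal point. Let X ⊆ ℝ^d be convex, μ > 0, τ ≥ 0, and let F, G : ℝ^d → ℝ. Suppose x̂ ∈ X, γ₀ ≥ 0, γ ≥ 0 with γ₀ + γ = 1, ζ_F is a μ-strong subgradient of F at x̂ over X, ζ_G is a μ-strong subgradient of G at x̂ over X, ν ∈ N_X(x̂), γ₀ζ_F + γζ_G + ν = 0, and γ·G(x̂) = 0. Then every x₊ ∈ X with F(x₊) ≤ F(x̂) + τ and G(x₊) ≤ τ satisfies ‖x₊ − x̂‖ ≤ sqrt(2τ/μ). -/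
open RealInnerProductSpace

/-- Proximity of near-optimal subproblem solutions to the exact proximal point. -/
theorem near_optimal_close_to_proximal_point {d : ℕ}
    (X : Set (EuclideanSpace ℝ (Fin d))) (hX : Convex ℝ X)
    (μ τ : ℝ) (hμ : 0 < μ) (hτ : 0 ≤ τ)
    (F G : EuclideanSpace ℝ (Fin d) → ℝ)
    (xh : EuclideanSpace ℝ (Fin d)) (hxh : xh ∈ X)
    (γ0 γ : ℝ) (hγ0 : 0 ≤ γ0) (hγ : 0 ≤ γ) (hγsum : γ0 + γ = 1)
    (ζF ζG ν : EuclideanSpace ℝ (Fin d))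
    (hζF : ∀ y ∈ X, F y ≥ F xh + ⟪ζF, y - xh⟫ + μ / 2 * ‖y - xh‖ ^ 2)
    (hζG : ∀ y ∈ X, G y ≥ G xh + ⟪ζG, y - xh⟫ + μ / 2 * ‖y - xh‖ ^ 2)
    (hν : ∀ y ∈ X, ⟪ν, y - xh⟫ ≤ 0)
    (heq : γ0 • ζF + γ • ζG + ν = 0)
    (hcomp : γ * G xh = 0)
    (xp : EuclideanSpace ℝ (Fin d)) (hxp : xp ∈ X)
    (hFxp : F xp ≤ F xh + τ) (hGxp : G xp ≤ τ) :
    ‖xp - xh‖ ≤ Real.sqrt (2 * τ / μ) := by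
  have h1 := hζF xp hxp
  have h2 := hζG xp hxp
  have h3 := hν xp hxp
  have hkey : ⟪γ0 • ζF + γ • ζG + ν, xp - xh⟫ = (0 : ℝ) := by
    rw [heq]; simp
  rw [inner_add_left, inner_add_left, real_inner_smul_left, real_inner_smul_left] at hkey
  have hsq : ‖xp - xh‖ ^ 2 ≤ 2 * τ / μ := by
    rw [le_div_iff₀ hμ]
    nlinarith [norm_nonneg (xp - xh), sq_nonneg (‖xp - xh‖)]
  have := Real.sqrt_le_sqrt hsq
  rwa [Real.sqrt_sq (norm_nonneg _)] at this
end

section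
/- Lemma 4, Fritz-John version: the inexact proximal step stays feasible before an ε-FJ point is reached. Let X ⊆ ℝ^d be convex, let 0 ≤ ρ < ρ̂ with ρ̂ > 1, set μ = ρ̂ − ρ, let ε > 0, and set τ = (ρ̂ − ρ)ε²/(4ρ̂(2ρ̂ − ρ)). Let f, g : ℝ^d → ℝ, let x_k ∈ X, and define F_k(x) = f(x) + (ρ̂/2)‖x − x_k‖² and G_k(x) = g(x) + (ρ̂/2)‖x − x_k‖². Suppose x̂ ∈ X, γ₀ ≥ 0, γ ≥ 0 with γ₀ + γ = 1, ζ_F is a μ-strong subgradient of F_k at x̂ over X, ζ_G is a μ-strong subgradient of G_k at x̂ over X, ν ∈ N_X(x̂), γ₀ζ_F + γζ_G + ν = 0, and γ·G_k(x̂) = 0. If ‖x̂ − x_k‖ > ε/ρ̂, then every x₊ ∈ X with F_k(x₊) ≤ F_k(x̂) + τ and G_k(x₊) ≤ τ satisfies g(x₊) ≤ 0. -/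
open RealInnerProductSpace

lemma aux_ineq (ρ ρ' ε a c : ℝ) (hρ : 0 ≤ ρ) (hρρ' : ρ < ρ') (hε : 0 < ε)
    (h2 : 2*ρ'*(2*ρ'-ρ)*a^2 ≤ ε^2) (h1 : ε < ρ'*(a+c)) :
    (ρ'-ρ)*ε^2 ≤ ρ'/2*c^2*(4*ρ'*(2*ρ'-ρ)) := by
  have hρ'pos : 0 < ρ' := by linarith
  have h3 : ε^2 < (ρ'*(a+c))^2 := by nlinarith
  nlinarith [sq_nonneg ((2*ρ'-ρ)*a - 2*ρ'*c), mul_nonneg hρ (sub_nonneg.2 h2),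
    mul_nonneg (sub_nonneg.2 h2) (by linarith : (0:ℝ) ≤ 2*ρ'-ρ),
    mul_nonneg (sub_nonneg.2 h3.le) (by linarith : (0:ℝ) ≤ ρ'-ρ),
    sq_nonneg (a - c), sq_nonneg (ρ'*a - ρ'*c), mul_pos hρ'pos hρ'pos]

set_option maxHeartbeats 1000000 in
/-- Lemma 4, Fritz-John version: the inexact proximal step stays feasible
before an ε-FJ point is reached. -/
theorem inexact_step_feasible_FJ {d : ℕ}
    (X : Set (EuclideanSpace ℝ (Fin d))) (hX : Convex ℝ X)
    (ρ ρ' μ ε τ : ℝ) (hρ : 0 ≤ ρ) (hρρ' : ρ < ρ') (hρ' : 1 < ρ')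
    (hμ : μ = ρ' - ρ) (hε : 0 < ε)
    (hτ : τ = (ρ' - ρ) * ε ^ 2 / (4 * ρ' * (2 * ρ' - ρ)))
    (f g : EuclideanSpace ℝ (Fin d) → ℝ)
    (xk : EuclideanSpace ℝ (Fin d)) (hxk : xk ∈ X)
    (Fk Gk : EuclideanSpace ℝ (Fin d) → ℝ)
    (hFk : ∀ x, Fk x = f x + ρ' / 2 * ‖x - xk‖ ^ 2)
    (hGk : ∀ x, Gk x = g x + ρ' / 2 * ‖x - xk‖ ^ 2)
    (xh : EuclideanSpace ℝ (Fin d)) (hxh : xh ∈ X)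
    (γ0 γ : ℝ) (hγ0 : 0 ≤ γ0) (hγ : 0 ≤ γ) (hγsum : γ0 + γ = 1)
    (ζF ζG ν : EuclideanSpace ℝ (Fin d))
    (hζF : ∀ y ∈ X, Fk y ≥ Fk xh + ⟪ζF, y - xh⟫ + μ / 2 * ‖y - xh‖ ^ 2)
    (hζG : ∀ y ∈ X, Gk y ≥ Gk xh + ⟪ζG, y - xh⟫ + μ / 2 * ‖y - xh‖ ^ 2)
    (hν : ∀ y ∈ X, ⟪ν, y - xh⟫ ≤ 0)
    (heq : γ0 • ζF + γ • ζG + ν = 0)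
    (hcomp : γ * Gk xh = 0)
    (hfar : ε / ρ' < ‖xh - xk‖)
    (xp : EuclideanSpace ℝ (Fin d)) (hxp : xp ∈ X)
    (hFxp : Fk xp ≤ Fk xh + τ) (hGxp : Gk xp ≤ τ) :
    g xp ≤ 0 := by
  have hρ'pos : 0 < ρ' := by linarith
  have hDpos : 0 < 4 * ρ' * (2 * ρ' - ρ) := by nlinarith
  -- inner product identity from stationarity
  have hsum : γ0 • ζF + γ • ζG = -ν := eq_neg_of_add_eq_zero_left heq
  have hin : γ0 * (inner ℝ ζF (xp - xh) : ℝ) + γ * (inner ℝ ζG (xp - xh) : ℝ)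
      = -(inner ℝ ν (xp - xh) : ℝ) := by
    have h : (inner ℝ (γ0 • ζF + γ • ζG) (xp - xh) : ℝ) = (inner ℝ (-ν) (xp - xh) : ℝ) := by
      rw [hsum]
    rw [inner_add_left, real_inner_smul_left, real_inner_smul_left, inner_neg_left] at h
    exact h
  have hinpos : 0 ≤ γ0 * (inner ℝ ζF (xp - xh) : ℝ) + γ * (inner ℝ ζG (xp - xh) : ℝ) := by
    rw [hin]; linarith [hν xp hxp]
  -- key bound: μ/2 ‖xp - xh‖² ≤ τ
  have hF := hζF xp hxp
  have hG := hζG xp hxp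
  have e1 := mul_le_mul_of_nonneg_left hF hγ0
  have e2 := mul_le_mul_of_nonneg_left hG hγ
  have e3 := mul_le_mul_of_nonneg_left hFxp hγ0
  have e4 := mul_le_mul_of_nonneg_left hGxp hγ
  have hM : γ0 * (μ / 2 * ‖xp - xh‖ ^ 2) + γ * (μ / 2 * ‖xp - xh‖ ^ 2)
      = μ / 2 * ‖xp - xh‖ ^ 2 := by rw [← add_mul, hγsum, one_mul]
  have hT : γ0 * τ + γ * τ = τ := by rw [← add_mul, hγsum, one_mul]
  have key : μ / 2 * ‖xp - xh‖ ^ 2 ≤ τ := by nlinarith [e1, e2, e3, e4, hinpos, hcomp, hM, hT]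
  -- turn into polynomial bound
  have h2 : 2 * ρ' * (2 * ρ' - ρ) * ‖xp - xh‖ ^ 2 ≤ ε ^ 2 := by
    rw [hμ] at key
    rw [hτ, le_div_iff₀ hDpos] at key
    have hμpos : (0:ℝ) < ρ' - ρ := by linarith
    by_contra hlt
    push_neg at hlt
    have := mul_lt_mul_of_pos_left hlt hμpos
    linarith [this, key]
  -- triangle inequality
  have htri : ‖xh - xk‖ ≤ ‖xp - xh‖ + ‖xp - xk‖ := by
    calc ‖xh - xk‖ = ‖(xh - xp) + (xp - xk)‖ := by rw [sub_add_sub_cancel]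
      _ ≤ ‖xh - xp‖ + ‖xp - xk‖ := norm_add_le _ _
      _ = ‖xp - xh‖ + ‖xp - xk‖ := by rw [norm_sub_rev]
  have h1 : ε < ρ' * (‖xp - xh‖ + ‖xp - xk‖) := by
    have hd := (div_lt_iff₀ hρ'pos).1 hfar
    have hm := mul_le_mul_of_nonneg_left htri hρ'pos.le
    linarith [hd, hm]
  have hfinal := aux_ineq ρ ρ' ε ‖xp - xh‖ ‖xp - xk‖ hρ hρρ' hε h2 h1
  have hτle : τ ≤ ρ' / 2 * ‖xp - xk‖ ^ 2 := by
    rw [hτ, div_le_iff₀ hDpos]; linarith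
  have := hGk xp
  linarith [hGxp, this.symm.le]
end

section
/- Descent inequality for the inexact proximal step (Fritz-John form). Let X ⊆ ℝ^d be convex, let μ > 0, ρ̂ > 0, τ ≥ 0, let f, g : ℝ^d → ℝ, let x_k ∈ X with g(x_k) ≤ 0, and define F_k(x) = f(x) + (ρ̂/2)‖x − x_k‖² and G_k(x) = g(x) + (ρ̂/2)‖x − x_k‖². Suppose x̂ ∈ X, γ₀ ≥ 0, γ ≥ 0 with γ₀ + γ = 1, ζ_F is a μ-strong subgradient of F_k at x̂ over X, ζ_G is a μ-strong subgradient of G_k at x̂ over X, ν ∈ N_X(x̂), γ₀ζ_F + γζ_G + ν = 0, and γ·G_k(x̂) = 0. Then every x₊ ∈ X with F_k(x₊) ≤ F_k(x̂) + τ satisfies γ₀(f(x_k) − f(x₊)) ≥ (μ/2)‖x̂ − x_k‖² − γ₀τ. -/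
open RealInnerProductSpace

/-- Descent inequality for the inexact proximal step (Fritz-John form). -/
theorem descent_inequality_FJ {d : ℕ}
    (X : Set (EuclideanSpace ℝ (Fin d))) (hX : Convex ℝ X)
    (μ ρ' τ : ℝ) (hμ : 0 < μ) (hρ' : 0 < ρ') (hτ : 0 ≤ τ)
    (f g : EuclideanSpace ℝ (Fin d) → ℝ)
    (xk : EuclideanSpace ℝ (Fin d)) (hxk : xk ∈ X) (hgxk : g xk ≤ 0)
    (Fk Gk : EuclideanSpace ℝ (Fin d) → ℝ)
    (hFk : ∀ x, Fk x = f x + ρ' / 2 * ‖x - xk‖ ^ 2)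
    (hGk : ∀ x, Gk x = g x + ρ' / 2 * ‖x - xk‖ ^ 2)
    (xh : EuclideanSpace ℝ (Fin d)) (hxh : xh ∈ X)
    (γ0 γ : ℝ) (hγ0 : 0 ≤ γ0) (hγ : 0 ≤ γ) (hγsum : γ0 + γ = 1)
    (ζF ζG ν : EuclideanSpace ℝ (Fin d))
    (hζF : ∀ y ∈ X, Fk y ≥ Fk xh + ⟪ζF, y - xh⟫ + μ / 2 * ‖y - xh‖ ^ 2)
    (hζG : ∀ y ∈ X, Gk y ≥ Gk xh + ⟪ζG, y - xh⟫ + μ / 2 * ‖y - xh‖ ^ 2)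
    (hν : ∀ y ∈ X, ⟪ν, y - xh⟫ ≤ 0)
    (heq : γ0 • ζF + γ • ζG + ν = 0)
    (hcomp : γ * Gk xh = 0)
    (xp : EuclideanSpace ℝ (Fin d)) (hxp : xp ∈ X)
    (hFxp : Fk xp ≤ Fk xh + τ) :
    γ0 * (f xk - f xp) ≥ μ / 2 * ‖xh - xk‖ ^ 2 - γ0 * τ := by
  have hF := hζF xk hxk
  have hG := hζG xk hxk
  have hνk := hν xk hxk
  have hinner : ⟪γ0 • ζF + γ • ζG + ν, xk - xh⟫ = 0 := by
    rw [heq, inner_zero_left]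
  have hlin : γ0 * ⟪ζF, xk - xh⟫ + γ * ⟪ζG, xk - xh⟫ + ⟪ν, xk - xh⟫ = 0 := by
    rw [← hinner, inner_add_left, inner_add_left, real_inner_smul_left, real_inner_smul_left]
  have hnorm : ‖xh - xk‖ = ‖xk - xh‖ := by rw [norm_sub_rev]
  have hFkxk : Fk xk = f xk := by simp [hFk xk]
  have hGkxk : Gk xk = g xk := by simp [hGk xk]
  have h1 : γ0 * (Fk xk - Fk xh) + γ * (Gk xk - Gk xh) ≥ μ / 2 * ‖xk - xh‖ ^ 2 := by
    have e1 := mul_le_mul_of_nonneg_left (by linarith : Fk xh + ⟪ζF, xk - xh⟫ + μ / 2 * ‖xk - xh‖ ^ 2 ≤ Fk xk) hγ0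
    have e2 := mul_le_mul_of_nonneg_left (by linarith : Gk xh + ⟪ζG, xk - xh⟫ + μ / 2 * ‖xk - xh‖ ^ 2 ≤ Gk xk) hγ
    have key : γ0 * (μ / 2 * ‖xk - xh‖ ^ 2) + γ * (μ / 2 * ‖xk - xh‖ ^ 2) = μ / 2 * ‖xk - xh‖ ^ 2 := by
      rw [← add_mul, hγsum, one_mul]
    nlinarith [e1, e2, key, hlin, hνk]
  have hγg : γ * Gk xk ≤ 0 := by
    rw [hGkxk]; exact mul_nonpos_of_nonneg_of_nonpos hγ hgxk
  have h2 : γ0 * (f xk - Fk xh) ≥ μ / 2 * ‖xk - xh‖ ^ 2 := by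
    nlinarith [h1]
  have h3 : Fk xh ≥ f xp - τ := by
    have := hFk xp
    nlinarith [sq_nonneg ‖xp - xk‖]
  calc γ0 * (f xk - f xp) ≥ γ0 * (f xk - Fk xh - τ) := by
        apply mul_le_mul_of_nonneg_left _ hγ0; linarith
    _ ≥ μ / 2 * ‖xh - xk‖ ^ 2 - γ0 * τ := by rw [hnorm]; nlinarith
end

section
/- Theorem 2 (outer-loop convergence to Fritz-John stationarity). Let X ⊆ ℝ^d be convex, let 0 ≤ ρ < ρ̂ with ρ̂ > 1, set μ = ρ̂ − ρ, let ε > 0, and set τ = (ρ̂ − ρ)ε²/(4ρ̂(2ρ̂ − ρ)). Let f, g : ℝ^d → ℝ with f(x) ≥ f_lb for all x ∈ X for some f_lb ∈ ℝ. Suppose sequences x : ℕ → X, x̂ : ℕ → X, γ₀, γ : ℕ → ℝ, ζ_F, ζ_G, ν : ℕ → ℝ^d satisfy: g(x₀) ≤ 0; and for every k ∈ ℕ, with F_k(x) = f(x) + (ρ̂/2)‖x − x_k‖² and G_k(x) = g(x) + (ρ̂/2)‖x − x_k‖²: γ₀(k) ≥ 0, γ(k) ≥ 0, γ₀(k) +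 γ(k) = 1; ζ_F(k) is a μ-strong subgradient of F_k at x̂_{k+1} over X; ζ_G(k) is a μ-strong subgradient of G_k at x̂_{k+1} over X; ν(k) ∈ N_X(x̂_{k+1}); γ₀(k)ζ_F(k) + γ(k)ζ_G(k) + ν(k) = 0; γ(k)·G_k(x̂_{k+1}) = 0; G_k(x̂_{k+1}) ≤ 0; F_k(x_{k+1}) ≤ F_k(x̂_{k+1}) + τ; and G_k(x_{k+1}) ≤ τ. Then there exists K ∈ ℕ with K ≤ 4ρ̂²(f(x₀) − f_lb)/((ρ̂ − ρ)ε²) such that g(x_K) ≤ 0 and ‖x̂_{K+1} − x_K‖ ≤ ε/ρ̂ (so that x_K is an (ε, ε)-Fritz-John point of minimizing f over {x ∈ X : g(x) ≤ 0}). -/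
open RealInnerProductSpace

lemma aux_sos (ρ' μ ε b : ℝ) (hρ' : 0 < ρ') (hμ : 0 < μ)
    (h : 2*ρ'*(ρ'+μ)*b^2 ≤ ε^2) : μ*ε^2 ≤ 2*(ρ'+μ)*(ε - ρ'*b)^2 := by
  nlinarith [mul_nonneg hμ.le (sub_nonneg.2 h), mul_nonneg hρ'.le (sq_nonneg (ε - (ρ'+μ)*b))]

set_option maxHeartbeats 1000000 in
/-- Theorem 2: outer-loop convergence to Fritz-John stationarity. -/
theorem outer_loop_convergence_FJ {d : ℕ}
    (X : Set (EuclideanSpace ℝ (Fin d))) (hX : Convex ℝ X)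
    (ρ ρ' μ ε τ flb : ℝ) (hρ : 0 ≤ ρ) (hρρ' : ρ < ρ') (hρ' : 1 < ρ')
    (hμ : μ = ρ' - ρ) (hε : 0 < ε)
    (hτ : τ = (ρ' - ρ) * ε ^ 2 / (4 * ρ' * (2 * ρ' - ρ)))
    (f g : EuclideanSpace ℝ (Fin d) → ℝ)
    (hflb : ∀ x ∈ X, flb ≤ f x)
    (x xh : ℕ → EuclideanSpace ℝ (Fin d))
    (hx : ∀ k, x k ∈ X) (hxh : ∀ k, xh k ∈ X)
    (γ0 γ : ℕ → ℝ) (ζF ζG ν : ℕ → EuclideanSpace ℝ (Fin d))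
    (hg0 : g (x 0) ≤ 0)
    (hγ0 : ∀ k, 0 ≤ γ0 k) (hγ : ∀ k, 0 ≤ γ k) (hγsum : ∀ k, γ0 k + γ k = 1)
    (hζF : ∀ k, ∀ y ∈ X,
      f y + ρ' / 2 * ‖y - x k‖ ^ 2 ≥
        (f (xh (k + 1)) + ρ' / 2 * ‖xh (k + 1) - x k‖ ^ 2)
        + ⟪ζF k, y - xh (k + 1)⟫ + μ / 2 * ‖y - xh (k + 1)‖ ^ 2)
    (hζG : ∀ k, ∀ y ∈ X,
      g y + ρ' / 2 * ‖y - x k‖ ^ 2 ≥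
        (g (xh (k + 1)) + ρ' / 2 * ‖xh (k + 1) - x k‖ ^ 2)
        + ⟪ζG k, y - xh (k + 1)⟫ + μ / 2 * ‖y - xh (k + 1)‖ ^ 2)
    (hν : ∀ k, ∀ y ∈ X, ⟪ν k, y - xh (k + 1)⟫ ≤ 0)
    (heq : ∀ k, γ0 k • ζF k + γ k • ζG k + ν k = 0)
    (hcomp : ∀ k, γ k * (g (xh (k + 1)) + ρ' / 2 * ‖xh (k + 1) - x k‖ ^ 2) = 0)
    (hGxh : ∀ k, g (xh (k + 1)) + ρ' / 2 * ‖xh (k + 1) - x k‖ ^ 2 ≤ 0)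
    (hFnear : ∀ k, f (x (k + 1)) + ρ' / 2 * ‖x (k + 1) - x k‖ ^ 2 ≤
      (f (xh (k + 1)) + ρ' / 2 * ‖xh (k + 1) - x k‖ ^ 2) + τ)
    (hGnear : ∀ k, g (x (k + 1)) + ρ' / 2 * ‖x (k + 1) - x k‖ ^ 2 ≤ τ) :
    ∃ K : ℕ, (K : ℝ) ≤ 4 * ρ' ^ 2 * (f (x 0) - flb) / ((ρ' - ρ) * ε ^ 2) ∧
      g (x K) ≤ 0 ∧ ‖xh (K + 1) - x K‖ ≤ ε / ρ' := by
  have hρ'0 : (0:ℝ) < ρ' := by linarith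
  have hμ0 : (0:ℝ) < μ := by rw [hμ]; linarith
  have hτ' : τ = μ * ε ^ 2 / (4 * ρ' * (ρ' + μ)) := by
    rw [hτ, hμ]; ring_nf
  have hρμ : (0:ℝ) < ρ' + μ := by linarith
  have hτ0 : 0 < τ := by
    rw [hτ']; positivity
  set B : ℝ := 4 * ρ' ^ 2 * (f (x 0) - flb) / ((ρ' - ρ) * ε ^ 2) with hB
  set δ : ℝ := μ * ε ^ 2 / (4 * ρ' ^ 2) with hδ
  have hδ0 : 0 < δ := by rw [hδ]; positivity
  -- key per-step lemma
  have hstep : ∀ k : ℕ, g (x k) ≤ 0 → ε / ρ' < ‖xh (k + 1) - x k‖ →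
      g (x (k + 1)) ≤ 0 ∧ f (x (k + 1)) ≤ f (x k) - δ := by
    intro k hgk hbig
    have hinner : ∀ w : EuclideanSpace ℝ (Fin d),
        γ0 k * ⟪ζF k, w⟫ + γ k * ⟪ζG k, w⟫ + ⟪ν k, w⟫ = 0 := by
      intro w
      have h : ⟪γ0 k • ζF k + γ k • ζG k + ν k, w⟫ = (0:ℝ) := by
        rw [heq k, inner_zero_left]
      rw [inner_add_left, inner_add_left, real_inner_smul_left,
        real_inner_smul_left] at h
      exact h
    -- part 1: ‖x(k+1) - xh(k+1)‖² ≤ 2τ/μ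
    have hu : μ / 2 * ‖x (k + 1) - xh (k + 1)‖ ^ 2 ≤ τ := by
      have h1 := hζF k (x (k + 1)) (hx (k + 1))
      have h2 := hζG k (x (k + 1)) (hx (k + 1))
      have h3 := hν k (x (k + 1)) (hx (k + 1))
      have h1m := mul_le_mul_of_nonneg_left h1 (hγ0 k)
      have h2m := mul_le_mul_of_nonneg_left h2 (hγ k)
      have hFm := mul_le_mul_of_nonneg_left (hFnear k) (hγ0 k)
      have hGm := mul_le_mul_of_nonneg_left (hGnear k) (hγ k)
      have hi := hinner (x (k + 1) - xh (k + 1))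
      have hc := hcomp k
      have e1 : γ0 k * (μ / 2 * ‖x (k+1) - xh (k+1)‖ ^ 2)
          + γ k * (μ / 2 * ‖x (k+1) - xh (k+1)‖ ^ 2)
          = μ / 2 * ‖x (k+1) - xh (k+1)‖ ^ 2 := by
        rw [← add_mul, hγsum k, one_mul]
      have e2 : γ0 k * τ + γ k * τ = τ := by rw [← add_mul, hγsum k, one_mul]
      linarith [h1m, h2m, hFm, hGm, hi, h3, hc, e1, e2]
    -- part 2: the combined inequality at y = x k
    have hw : γ0 k * f (x k) + γ k * g (x k) ≥
        γ0 k * (f (xh (k + 1)) + ρ' / 2 * ‖xh (k + 1) - x k‖ ^ 2) + μ / 2 * ‖x k - xh (k + 1)‖ ^ 2 := by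
      have h1 := hζF k (x k) (hx k)
      have h2 := hζG k (x k) (hx k)
      have h3 := hν k (x k) (hx k)
      rw [sub_self, norm_zero] at h1 h2
      have h1m := mul_le_mul_of_nonneg_left h1 (hγ0 k)
      have h2m := mul_le_mul_of_nonneg_left h2 (hγ k)
      have hi := hinner (x k - xh (k + 1))
      have hc := hcomp k
      have e1 : γ0 k * (μ / 2 * ‖x k - xh (k+1)‖ ^ 2)
          + γ k * (μ / 2 * ‖x k - xh (k+1)‖ ^ 2)
          = μ / 2 * ‖x k - xh (k+1)‖ ^ 2 := by
        rw [← add_mul, hγsum k, one_mul]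
      linarith [h1m, h2m, hi, h3, hc, e1]
    have hwn : ‖x k - xh (k + 1)‖ = ‖xh (k + 1) - x k‖ := norm_sub_rev _ _
    -- γ0 k > 0
    have hγ0pos : 0 < γ0 k := by
      rcases (hγ0 k).lt_or_eq with h | h
      · exact h
      · exfalso
        have hγ1 : γ k = 1 := by have := hγsum k; linarith
        rw [← h, hγ1] at hw
        have h1 : μ / 2 * ‖x k - xh (k + 1)‖ ^ 2 ≤ 0 := by linarith [hgk]
        have h2 : (0:ℝ) ≤ μ / 2 * ‖x k - xh (k + 1)‖ ^ 2 := by positivity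
        have h3 : ‖x k - xh (k + 1)‖ ^ 2 = 0 := by
          rcases mul_eq_zero.mp (le_antisymm h1 h2) with h' | h'
          · exfalso; linarith
          · exact h'
        have hn0 : ‖x k - xh (k + 1)‖ = 0 := by
          exact pow_eq_zero_iff two_ne_zero |>.mp h3
        rw [hwn] at hn0
        have hpos : (0:ℝ) < ε / ρ' := by positivity
        rw [hn0] at hbig
        linarith
    -- descent
    have hdes : f (x k) ≥ (f (xh (k + 1)) + ρ' / 2 * ‖xh (k + 1) - x k‖ ^ 2) + μ / 2 * ‖x k - xh (k + 1)‖ ^ 2 := by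
      have hγ0le : γ0 k ≤ 1 := by have := hγsum k; have := hγ k; linarith
      have hgm : γ k * g (x k) ≤ 0 := mul_nonpos_of_nonneg_of_nonpos (hγ k) hgk
      have key : γ0 k * ((f (xh (k + 1)) + ρ' / 2 * ‖xh (k + 1) - x k‖ ^ 2) + μ / 2 * ‖x k - xh (k + 1)‖ ^ 2) ≤ γ0 k * f (x k) := by
        have hwnn : (0:ℝ) ≤ μ / 2 * ‖x k - xh (k + 1)‖ ^ 2 := by positivity
        have hγ0le : γ0 k ≤ 1 := by have h1 := hγsum k; have h2 := hγ k; linarith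
        have hmul : 0 ≤ (1 - γ0 k) * (μ / 2 * ‖x k - xh (k + 1)‖ ^ 2) :=
          mul_nonneg (by linarith) hwnn
        nlinarith [hw, hgm, hmul]
      exact le_of_mul_le_mul_left key hγ0pos
    have hτle : τ ≤ μ * ε ^ 2 / (4 * ρ' ^ 2) := by
      rw [hτ', div_le_div_iff₀ (by positivity) (by positivity)]
      have h4 : μ * ε ^ 2 * (4 * ρ' * (ρ' + μ)) - μ * ε ^ 2 * (4 * ρ' ^ 2)
          = 4 * (μ ^ 2 * ε ^ 2 * ρ') := by ring
      have h5 : (0:ℝ) ≤ 4 * (μ ^ 2 * ε ^ 2 * ρ') := by positivity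
      linarith
    have hbig2 : ε ^ 2 / ρ' ^ 2 < ‖x k - xh (k + 1)‖ ^ 2 := by
      rw [hwn]
      have h0 : (0:ℝ) ≤ ε / ρ' := by positivity
      calc ε ^ 2 / ρ' ^ 2 = (ε / ρ') ^ 2 := by ring
        _ < ‖xh (k + 1) - x k‖ ^ 2 := by nlinarith [hbig, norm_nonneg (xh (k+1) - x k)]
    have hfdes : f (x (k + 1)) ≤ f (x k) - δ := by
      have hF := hFnear k
      have hs2 : (0:ℝ) ≤ ρ' / 2 * ‖x (k + 1) - x k‖ ^ 2 := by positivity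
      have : μ / 2 * (ε ^ 2 / ρ' ^ 2) ≤ μ / 2 * ‖x k - xh (k + 1)‖ ^ 2 :=
        mul_le_mul_of_nonneg_left hbig2.le (by positivity)
      have hδeq : δ = μ * ε ^ 2 / (4 * ρ' ^ 2) := hδ
      have h1 : μ / 2 * (ε ^ 2 / ρ' ^ 2) = 2 * (μ * ε ^ 2 / (4 * ρ' ^ 2)) := by
        field_simp
        ring
      linarith
    -- feasibility of x(k+1)
    have hgdes : g (x (k + 1)) ≤ 0 := by
      set b : ℝ := ‖x (k + 1) - xh (k + 1)‖ with hb
      have hb0 : 0 ≤ b := norm_nonneg _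
      have hbsq : 2 * ρ' * (ρ' + μ) * b ^ 2 ≤ ε ^ 2 := by
        have h2τ : 2 * τ = μ * ε ^ 2 / (2 * ρ' * (ρ' + μ)) := by
          rw [hτ']; field_simp
          try ring
        have h1 : μ * b ^ 2 ≤ μ * ε ^ 2 / (2 * ρ' * (ρ' + μ)) := by
          rw [← h2τ]; linarith [hu]
        rw [le_div_iff₀ (by positivity)] at h1
        have h2 : μ * (2 * ρ' * (ρ' + μ) * b ^ 2) ≤ μ * ε ^ 2 := by linarith [h1]
        exact le_of_mul_le_mul_left h2 hμ0
      have hsos := aux_sos ρ' μ ε b hρ'0 hμ0 hbsq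
      -- ρ' * b ≤ ε
      have hρb : ρ' * b ≤ ε := by
        nlinarith [mul_nonneg (mul_nonneg hρ'0.le hμ0.le) (sq_nonneg b),
          mul_nonneg (mul_nonneg hρ'0.le hρ'0.le) (sq_nonneg b), hε,
          mul_nonneg hρ'0.le hb0]
      -- triangle: ‖xh(k+1) - x k‖ ≤ ‖x(k+1) - x k‖ + b
      have htri : ‖xh (k + 1) - x k‖ ≤ ‖x (k + 1) - x k‖ + b := by
        calc ‖xh (k + 1) - x k‖ = ‖(x (k+1) - x k) - (x (k+1) - xh (k+1))‖ := by
              congr 1; abel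
          _ ≤ ‖x (k+1) - x k‖ + ‖x (k+1) - xh (k+1)‖ := norm_sub_le _ _
      set s : ℝ := ‖x (k + 1) - x k‖ with hs
      have hs0 : 0 ≤ s := norm_nonneg _
      have hsab : ε / ρ' - b < s := by linarith [hbig, htri]
      have hab0 : 0 ≤ ε / ρ' - b := by
        rw [sub_nonneg, le_div_iff₀ hρ'0]; linarith [hρb]
      have hss : (ε / ρ' - b) ^ 2 ≤ s ^ 2 := by nlinarith
      have hkey : 2 * τ ≤ ρ' * s ^ 2 := by
        have h2τ : 2 * τ = μ * ε ^ 2 / (2 * ρ' * (ρ' + μ)) := by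
          rw [hτ']; field_simp
          try ring
        rw [h2τ, div_le_iff₀ (by positivity)]
        have he : (ε - ρ' * b) ^ 2 = ρ' ^ 2 * (ε / ρ' - b) ^ 2 := by
          field_simp
        ring
        rw [he] at hsos
        have hmul := mul_le_mul_of_nonneg_left hss
          (show (0:ℝ) ≤ 2 * (ρ' + μ) * ρ' ^ 2 by positivity)
        nlinarith [hsos, hmul]
      have := hGnear k
      linarith
    exact ⟨hgdes, hfdes⟩
  -- main argument
  by_contra hcon
  push_neg at hcon
  have hB0 : 0 ≤ B := by
    rw [hB]
    have := hflb (x 0) (hx 0)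
    apply div_nonneg <;> nlinarith [sq_nonneg ε, hε]
  have main : ∀ k : ℕ, (k : ℝ) ≤ B + 1 → g (x k) ≤ 0 ∧ f (x k) ≤ f (x 0) - k * δ := by
    intro k
    induction k with
    | zero => intro _; simpa using hg0
    | succ k ih =>
      intro hk1
      have hkB : (k : ℝ) ≤ B := by push_cast at hk1 ⊢; linarith
      obtain ⟨hg, hf⟩ := ih (by linarith)
      have hbig := hcon k hkB hg
      obtain ⟨hg', hf'⟩ := hstep k hg hbig
      refine ⟨hg', ?_⟩
      push_cast
      linarith
  have hge : (0:ℤ) ≤ ⌊B⌋ := Int.floor_nonneg.2 hB0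
  have hfl : ((⌊B⌋.toNat : ℕ) : ℝ) = ((⌊B⌋ : ℤ) : ℝ) := by
    exact_mod_cast congrArg (fun z : ℤ => (z : ℝ)) (Int.toNat_of_nonneg hge)
  have hk0le : ((⌊B⌋.toNat + 1 : ℕ) : ℝ) ≤ B + 1 := by
    push_cast
    rw [hfl]
    linarith [Int.floor_le B]
  have hk0gt : B < ((⌊B⌋.toNat + 1 : ℕ) : ℝ) := by
    push_cast
    rw [hfl]
    linarith [Int.lt_floor_add_one B]
  obtain ⟨_, hf⟩ := main (⌊B⌋.toNat + 1) hk0le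
  have hBδ : B * δ = f (x 0) - flb := by
    rw [hB, hδ, ← hμ]
    field_simp
  have hlb := hflb (x (⌊B⌋.toNat + 1)) (hx (⌊B⌋.toNat + 1))
  have hmul : B * δ < ((⌊B⌋.toNat + 1 : ℕ) : ℝ) * δ :=
    mul_lt_mul_of_pos_right hk0gt hδ0
  linarith
end

section
/- Descent inequality for the inexact proximal step (KKT form). Let X ⊆ ℝ^d be convex, let μ > 0, ρ̂ > 0, τ ≥ 0, let f, g : ℝ^d → ℝ, let x_k ∈ X with g(x_k) ≤ 0, and define F_k(x) = f(x) + (ρ̂/2)‖x − x_k‖² and G_k(x) = g(x) + (ρ̂/2)‖x − x_k‖². Suppose x̂ ∈ X, λ ≥ 0, ζ_F is a μ-strong subgradient of F_k at x̂ over X, ζ_G is a μ-strong subgradient of G_k at x̂ over X, ν ∈ N_X(x̂), ζ_F + λζ_G + ν = 0, and λ·G_k(x̂) = 0. Then every x₊ ∈ X with F_k(x₊) ≤ F_k(x̂) + τ satisfies f(x_k) − f(x₊) ≥ ((1+λ)μ/2)‖x̂ − x_k‖² − τ. -/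
open RealInnerProductSpace

/-- Descent inequality for the inexact proximal step (KKT form). -/
theorem descent_inequality_KKT {d : ℕ}
    (X : Set (EuclideanSpace ℝ (Fin d))) (hX : Convex ℝ X)
    (μ ρ' τ : ℝ) (hμ : 0 < μ) (hρ' : 0 < ρ') (hτ : 0 ≤ τ)
    (f g : EuclideanSpace ℝ (Fin d) → ℝ)
    (xk : EuclideanSpace ℝ (Fin d)) (hxk : xk ∈ X) (hgxk : g xk ≤ 0)
    (Fk Gk : EuclideanSpace ℝ (Fin d) → ℝ)
    (hFk : ∀ x, Fk x = f x + ρ' / 2 * ‖x - xk‖ ^ 2)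
    (hGk : ∀ x, Gk x = g x + ρ' / 2 * ‖x - xk‖ ^ 2)
    (xh : EuclideanSpace ℝ (Fin d)) (hxh : xh ∈ X)
    (lam : ℝ) (hlam : 0 ≤ lam)
    (ζF ζG ν : EuclideanSpace ℝ (Fin d))
    (hζF : ∀ y ∈ X, Fk y ≥ Fk xh + ⟪ζF, y - xh⟫ + μ / 2 * ‖y - xh‖ ^ 2)
    (hζG : ∀ y ∈ X, Gk y ≥ Gk xh + ⟪ζG, y - xh⟫ + μ / 2 * ‖y - xh‖ ^ 2)
    (hν : ∀ y ∈ X, ⟪ν, y - xh⟫ ≤ 0)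
    (heq : ζF + lam • ζG + ν = 0)
    (hcomp : lam * Gk xh = 0)
    (xp : EuclideanSpace ℝ (Fin d)) (hxp : xp ∈ X)
    (hFxp : Fk xp ≤ Fk xh + τ) :
    f xk - f xp ≥ (1 + lam) * μ / 2 * ‖xh - xk‖ ^ 2 - τ := by

  have hF := hζF xk hxk
  have hG := hζG xk hxk
  have hνk := hν xk hxk
  have hip : ⟪ζF, xk - xh⟫ + lam * ⟪ζG, xk - xh⟫ = ⟪(-ν : EuclideanSpace ℝ (Fin d)), xk - xh⟫ := by
    have : ζF + lam • ζG = -ν := by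
      have := heq
      linear_combination (norm := module) this
    rw [← this, inner_add_left, real_inner_smul_left]
  have hsum : ⟪ζF, xk - xh⟫ + lam * ⟪ζG, xk - xh⟫ ≥ 0 := by
    rw [hip, inner_neg_left]; linarith
  have hFxk : Fk xk = f xk := by simp [hFk]
  have hGxk : Gk xk = g xk := by simp [hGk]
  have hnorm : ‖xk - xh‖ = ‖xh - xk‖ := norm_sub_rev _ _
  have hGterm : lam * Gk xk ≥ lam * Gk xh + lam * ⟪ζG, xk - xh⟫ + lam * (μ / 2 * ‖xk - xh‖ ^ 2) := by
    nlinarith [mul_le_mul_of_nonneg_left hG hlam]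
  have hgk : lam * g xk ≤ 0 := mul_nonpos_of_nonneg_of_nonpos hlam hgxk
  have hFxp' : Fk xp ≥ f xp := by
    rw [hFk]; nlinarith [sq_nonneg ‖xp - xk‖]
  rw [hnorm] at hF hGterm
  nlinarith [hF, hGterm]
end

section
/- Theorem 3 (outer-loop convergence to KKT stationarity under bounded multipliers). Let X ⊆ ℝ^d be convex, let 0 ≤ ρ < ρ̂ with ρ̂ > 1, set μ = ρ̂ − ρ, let ε > 0 and B ≥ 0, and set τ = (ρ̂ − ρ)ε²/(4(1+B)²ρ̂(2ρ̂ − ρ)). Let f, g : ℝ^d → ℝ with f(x) ≥ f_lb for all x ∈ X for some f_lb ∈ ℝ. Suppose sequences x : ℕ → X, x̂ : ℕ → X, λ : ℕ → ℝ, ζ_F, ζ_G, ν : ℕ → ℝ^d satisfy: g(x₀) ≤ 0; and for every k ∈ ℕ, with F_k(x) = f(x) + (ρ̂/2)‖x − x_k‖² and G_k(x) = g(x) + (ρ̂/2)‖x − x_k‖²: 0 ≤ λ(k) ≤ B; ζ_F(k) is a μ-strong subgradient of F_k at x̂_{k+1} over X; ζ_G(k) is a μ-strong subgradient of G_k at x̂_{k+1}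 over X; ν(k) ∈ N_X(x̂_{k+1}); ζ_F(k) + λ(k)ζ_G(k) + ν(k) = 0; λ(k)·G_k(x̂_{k+1}) = 0; G_k(x̂_{k+1}) ≤ 0; F_k(x_{k+1}) ≤ F_k(x̂_{k+1}) + τ; and G_k(x_{k+1}) ≤ τ. Then there exists K ∈ ℕ with K ≤ 4(1+B)ρ̂²(f(x₀) − f_lb)/((ρ̂ − ρ)ε²) such that g(x_K) ≤ 0 and ‖x̂_{K+1} − x_K‖ ≤ ε/(ρ̂(1+λ(K))) (so that x_K is an (ε, ε)-KKT point of minimizing f over {x ∈ X : g(x) ≤ 0}). -/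
open RealInnerProductSpace

lemma key_alg {N s A σ β q : ℝ} (hN : 0 ≤ N) (hs : 0 ≤ s) (hq : 0 ≤ q) (hA : 0 ≤ A)
    (h1 : s^2 ≤ σ) (h2 : A ≤ N + s) (h3 : σ + β + 2*q ≤ A^2)
    (h4 : σ*β ≤ q^2) (hβ : 0 ≤ β) : β ≤ N^2 := by
  by_contra h
  push_neg at h
  have hσ : 0 ≤ σ := le_trans (sq_nonneg s) h1
  have hns : N*s ≤ q := by nlinarith [mul_nonneg hN hs, sq_nonneg (N*s)]
  nlinarith [sq_nonneg (N+s), mul_nonneg hN hs]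


set_option maxHeartbeats 1000000

/-- Theorem 3: outer-loop convergence to KKT stationarity under bounded multipliers. -/
theorem outer_loop_convergence_KKT {d : ℕ}
    (X : Set (EuclideanSpace ℝ (Fin d))) (hX : Convex ℝ X)
    (ρ ρ' μ ε B τ flb : ℝ) (hρ : 0 ≤ ρ) (hρρ' : ρ < ρ') (hρ' : 1 < ρ')
    (hμ : μ = ρ' - ρ) (hε : 0 < ε) (hB : 0 ≤ B)
    (hτ : τ = (ρ' - ρ) * ε ^ 2 / (4 * (1 + B) ^ 2 * ρ' * (2 * ρ' - ρ)))
    (f g : EuclideanSpace ℝ (Fin d) → ℝ)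
    (hflb : ∀ x ∈ X, flb ≤ f x)
    (x xh : ℕ → EuclideanSpace ℝ (Fin d))
    (hx : ∀ k, x k ∈ X) (hxh : ∀ k, xh k ∈ X)
    (lam : ℕ → ℝ) (ζF ζG ν : ℕ → EuclideanSpace ℝ (Fin d))
    (hg0 : g (x 0) ≤ 0)
    (hlam : ∀ k, 0 ≤ lam k) (hlamB : ∀ k, lam k ≤ B)
    (hζF : ∀ k, ∀ y ∈ X,
      f y + ρ' / 2 * ‖y - x k‖ ^ 2 ≥
        (f (xh (k + 1)) + ρ' / 2 * ‖xh (k + 1) - x k‖ ^ 2)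
        + ⟪ζF k, y - xh (k + 1)⟫ + μ / 2 * ‖y - xh (k + 1)‖ ^ 2)
    (hζG : ∀ k, ∀ y ∈ X,
      g y + ρ' / 2 * ‖y - x k‖ ^ 2 ≥
        (g (xh (k + 1)) + ρ' / 2 * ‖xh (k + 1) - x k‖ ^ 2)
        + ⟪ζG k, y - xh (k + 1)⟫ + μ / 2 * ‖y - xh (k + 1)‖ ^ 2)
    (hν : ∀ k, ∀ y ∈ X, ⟪ν k, y - xh (k + 1)⟫ ≤ 0)
    (heq : ∀ k, ζF k + lam k • ζG k + ν k = 0)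
    (hcomp : ∀ k, lam k * (g (xh (k + 1)) + ρ' / 2 * ‖xh (k + 1) - x k‖ ^ 2) = 0)
    (hGxh : ∀ k, g (xh (k + 1)) + ρ' / 2 * ‖xh (k + 1) - x k‖ ^ 2 ≤ 0)
    (hFnear : ∀ k, f (x (k + 1)) + ρ' / 2 * ‖x (k + 1) - x k‖ ^ 2 ≤
      (f (xh (k + 1)) + ρ' / 2 * ‖xh (k + 1) - x k‖ ^ 2) + τ)
    (hGnear : ∀ k, g (x (k + 1)) + ρ' / 2 * ‖x (k + 1) - x k‖ ^ 2 ≤ τ) :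
    ∃ K : ℕ, (K : ℝ) ≤ 4 * (1 + B) * ρ' ^ 2 * (f (x 0) - flb) / ((ρ' - ρ) * ε ^ 2) ∧
      g (x K) ≤ 0 ∧ ‖xh (K + 1) - x K‖ ≤ ε / (ρ' * (1 + lam K)) := by
  subst hμ
  have hρ'0 : (0:ℝ) < ρ' := by linarith
  have hμ0 : (0:ℝ) < ρ' - ρ := by linarith
  have hB1 : (0:ℝ) < 1 + B := by linarith
  have h2ρ : (0:ℝ) < 2*ρ' - ρ := by linarith
  have hlam1 : ∀ k, (0:ℝ) < 1 + lam k := fun k => by linarith [hlam k]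
  have hlamB1 : ∀ k, 1 + lam k ≤ 1 + B := fun k => by linarith [hlamB k]
  have hBne : (1+B) ≠ 0 := ne_of_gt hB1
  have hρ'ne : ρ' ≠ 0 := ne_of_gt hρ'0
  have hμne : ρ' - ρ ≠ 0 := ne_of_gt hμ0
  have h2ρne : 2*ρ' - ρ ≠ 0 := ne_of_gt h2ρ
  have hDpos : (0:ℝ) < 4*(1+B)^2*ρ'*(2*ρ'-ρ) :=
    mul_pos (mul_pos (mul_pos four_pos (pow_pos hB1 2)) hρ'0) h2ρ
  have hτ0 : 0 < τ := by
    rw [hτ]; exact div_pos (mul_pos hμ0 (pow_pos hε 2)) hDpos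
  set c₀ : ℝ := (ρ'-ρ) * ε^2 / (4*(1+B)*ρ'^2) with hc₀def
  have hPpos : (0:ℝ) < 4*(1+B)*ρ'^2 := mul_pos (mul_pos four_pos hB1) (pow_pos hρ'0 2)
  have hc₀ : 0 < c₀ := div_pos (mul_pos hμ0 (pow_pos hε 2)) hPpos
  have hτc₀ : τ ≤ c₀ := by
    rw [hτ, hc₀def, div_le_div_iff₀ hDpos hPpos]
    have hkey2 : ρ' ≤ (1+B)*(2*ρ'-ρ) := by nlinarith
    have h1 : (0:ℝ) ≤ (ρ'-ρ)*ε^2*(4*(1+B)*ρ') :=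
      le_of_lt (mul_pos (mul_pos hμ0 (pow_pos hε 2)) (by positivity))
    nlinarith [mul_le_mul_of_nonneg_left hkey2 h1]
  -- key combined inequality
  have hkey : ∀ k, ∀ y ∈ X,
      f y + lam k * g y + (1 + lam k) * (ρ'/2) * ‖y - x k‖^2 ≥
      (f (xh (k+1)) + ρ'/2 * ‖xh (k+1) - x k‖^2)
        + (1 + lam k) * ((ρ'-ρ)/2) * ‖y - xh (k+1)‖^2 := by
    intro k y hy
    have h1 := hζF k y hy
    have h2 := hζG k y hy
    have hinner : 0 ≤ ⟪ζF k, y - xh (k+1)⟫ + lam k * ⟪ζG k, y - xh (k+1)⟫ := by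
      have h0 : ⟪ζF k + lam k • ζG k + ν k, y - xh (k+1)⟫ = 0 := by
        rw [heq k]; simp
      rw [inner_add_left, inner_add_left, real_inner_smul_left] at h0
      have := hν k y hy
      linarith
    have h2' := mul_le_mul_of_nonneg_left h2 (hlam k)
    have hc := hcomp k
    nlinarith [h1, h2', hinner, hc]
  -- distance between x(k+1) and xh(k+1)
  have hdist : ∀ k, (ρ'-ρ)/2 * ‖x (k+1) - xh (k+1)‖^2 ≤ τ := by
    intro k
    have h := hkey k (x (k+1)) (hx (k+1))
    have hF := hFnear k
    have hG := hGnear k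
    have hlG := mul_le_mul_of_nonneg_left hG (hlam k)
    have h5 : (1 + lam k) * ((ρ'-ρ)/2 * ‖x (k+1) - xh (k+1)‖^2) ≤ (1 + lam k) * τ := by
      nlinarith [h, hF, hlG]
    exact (mul_le_mul_iff_right₀ (hlam1 k)).mp h5
  -- feasibility of next iterate when current step is long
  have hfeas : ∀ k, ε / (ρ' * (1 + lam k)) < ‖xh (k+1) - x k‖ → g (x (k+1)) ≤ 0 := by
    intro k hk
    have htri : ‖xh (k+1) - x k‖ ≤ ‖x (k+1) - xh (k+1)‖ + ‖x (k+1) - x k‖ := by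
      have := dist_triangle (xh (k+1)) (x (k+1)) (x k)
      simp only [dist_eq_norm] at this
      rw [norm_sub_rev (xh (k+1)) (x (k+1))] at this
      linarith
    have hA : ε/(ρ'*(1+B)) ≤ ε/(ρ'*(1+lam k)) := by
      apply div_le_div_of_nonneg_left hε.le (mul_pos hρ'0 (hlam1 k))
      nlinarith [hlamB k]
    have hβ : (2*τ/ρ') ≤ ‖x (k+1) - x k‖^2 := by
      refine key_alg (N := ‖x (k+1) - x k‖) (s := ‖x (k+1) - xh (k+1)‖)
        (A := ε/(ρ'*(1+B))) (σ := 2*τ/(ρ'-ρ)) (β := 2*τ/ρ') (q := (ε/(1+B))^2/(4*ρ'^2))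
        (norm_nonneg _) (norm_nonneg _) (by positivity)
        (le_of_lt (div_pos hε (mul_pos hρ'0 hB1))) ?_ ?_ ?_ ?_ ?_
      · rw [le_div_iff₀ hμ0]; nlinarith [hdist k]
      · linarith
      · refine le_of_eq ?_
        rw [hτ]
        field_simp
        ring
      · -- (2τ/(ρ'-ρ))*(2τ/ρ') ≤ ((ε/(1+B))^2/(4ρ'^2))^2
        have e1 : (2*τ/(ρ'-ρ)) * (2*τ/ρ') = 4*τ^2/((ρ'-ρ)*ρ') := by
          field_simp; ring
        have e2 : ((ε/(1+B))^2/(4*ρ'^2))^2 = ε^4/(16*(1+B)^4*ρ'^4) := by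
          field_simp; ring
        rw [e1, e2, div_le_div_iff₀ (mul_pos hμ0 hρ'0) (by positivity)]
        -- goal: 4*τ^2*(16*(1+B)^4*ρ'^4) ≤ ε^4*((ρ'-ρ)*ρ')
        have hτval : τ * (4*(1+B)^2*ρ'*(2*ρ'-ρ)) = (ρ'-ρ)*ε^2 := by
          rw [hτ]; exact div_mul_cancel₀ _ (ne_of_gt hDpos)
        have hτsq : τ^2 * (16*(1+B)^4*ρ'^2*(2*ρ'-ρ)^2) = (ρ'-ρ)^2*ε^4 := by
          have h' : (τ * (4*(1+B)^2*ρ'*(2*ρ'-ρ)))^2 = ((ρ'-ρ)*ε^2)^2 := by rw [hτval]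
          linear_combination h'
        have hAM : 4*(ρ'-ρ)*ρ' ≤ (2*ρ'-ρ)^2 := by nlinarith [sq_nonneg ρ]
        have h2ρsq : (0:ℝ) < (2*ρ'-ρ)^2 := pow_pos h2ρ 2
        rw [← mul_le_mul_iff_left₀ h2ρsq]
        have hcpos : (0:ℝ) ≤ (ρ'-ρ)*ε^4*ρ' :=
          le_of_lt (mul_pos (mul_pos hμ0 (pow_pos hε 4)) hρ'0)
        nlinarith [hτsq, mul_le_mul_of_nonneg_left hAM hcpos, sq_nonneg ρ',
          mul_le_mul_of_nonneg_left hτsq.le (sq_nonneg ρ'),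
          mul_le_mul_of_nonneg_left hτsq.ge (sq_nonneg ρ')]
      · exact le_of_lt (div_pos (by linarith) hρ'0)
    have hG := hGnear k
    have h2τ : 2*τ ≤ ‖x (k+1) - x k‖^2 * ρ' := (div_le_iff₀ hρ'0).mp hβ
    nlinarith
  -- descent step
  have hdesc : ∀ k, g (x k) ≤ 0 → ε / (ρ' * (1 + lam k)) < ‖xh (k+1) - x k‖ →
      f (x (k+1)) + c₀ ≤ f (x k) := by
    intro k hgk hk
    have h := hkey k (x k) (hx k)
    rw [sub_self, norm_zero] at h
    rw [norm_sub_rev (x k) (xh (k+1))] at h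
    have hF := hFnear k
    have hr : ε < ‖xh (k+1) - x k‖ * (ρ' * (1 + lam k)) :=
      (div_lt_iff₀ (mul_pos hρ'0 (hlam1 k))).mp hk
    have hrn : (0:ℝ) ≤ ‖xh (k+1) - x k‖ := norm_nonneg _
    have hε2 : ε^2 ≤ ‖xh (k+1) - x k‖^2 * (ρ'*(1+lam k))^2 := by
      nlinarith [mul_le_mul hr.le hr.le hε.le (mul_nonneg hrn (mul_pos hρ'0 (hlam1 k)).le)]
    have hr2 : 2*c₀ ≤ (1 + lam k) * ((ρ'-ρ)/2) * ‖xh (k+1) - x k‖^2 := by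
      have h2c : 2*c₀ = (ρ'-ρ)*ε^2/(2*(1+B)*ρ'^2) := by
        rw [hc₀def]; field_simp; ring
      rw [h2c, div_le_iff₀ (mul_pos (mul_pos two_pos hB1) (pow_pos hρ'0 2))]
      have e1 : (ρ'-ρ)*ε^2 ≤ (ρ'-ρ)*(‖xh (k+1) - x k‖^2 * (ρ'*(1+lam k))^2) :=
        mul_le_mul_of_nonneg_left hε2 hμ0.le
      have e2 : (ρ'-ρ)*‖xh (k+1) - x k‖^2*ρ'^2*(1+lam k)*(1+lam k) ≤
          (ρ'-ρ)*‖xh (k+1) - x k‖^2*ρ'^2*(1+lam k)*(1+B) :=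
        mul_le_mul_of_nonneg_left (hlamB1 k)
          (mul_nonneg (mul_nonneg (mul_nonneg hμ0.le (sq_nonneg _)) (sq_nonneg ρ')) (hlam1 k).le)
      nlinarith [e1, e2]
    have hlg : lam k * g (x k) ≤ 0 := mul_nonpos_of_nonneg_of_nonpos (hlam k) hgk
    nlinarith [h, hF, hr2, hτc₀, hlg]
  -- induction
  have hind : ∀ k, (∀ j, j < k → ε/(ρ'*(1+lam j)) < ‖xh (j+1) - x j‖) →
      g (x k) ≤ 0 ∧ f (x k) + k * c₀ ≤ f (x 0) := by
    intro k
    induction k with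
    | zero => intro _; exact ⟨hg0, by simp⟩
    | succ n ih =>
      intro h
      obtain ⟨hgn, hfn⟩ := ih (fun j hj => h j (Nat.lt_succ_of_lt hj))
      have hn := h n (Nat.lt_succ_self n)
      refine ⟨hfeas n hn, ?_⟩
      have := hdesc n hgn hn
      push_cast
      linarith
  have hex : ∃ k, ‖xh (k+1) - x k‖ ≤ ε/(ρ'*(1+lam k)) := by
    by_contra hcon
    push_neg at hcon
    obtain ⟨n, hn⟩ := exists_nat_gt ((f (x 0) - flb)/c₀)
    have h2 := (hind n (fun j _ => hcon j)).2
    have hfl := hflb (x n) (hx n)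
    rw [div_lt_iff₀ hc₀] at hn
    linarith
  set K := Nat.find hex with hKdef
  have hKspec : ‖xh (K+1) - x K‖ ≤ ε/(ρ'*(1+lam K)) := Nat.find_spec hex
  have hKmin : ∀ j, j < K → ε/(ρ'*(1+lam j)) < ‖xh (j+1) - x j‖ :=
    fun j hj => lt_of_not_ge (Nat.find_min hex hj)
  obtain ⟨hgK, hfK⟩ := hind K hKmin
  refine ⟨K, ?_, hgK, hKspec⟩
  have hfl := hflb (x K) (hx K)
  have h1 : (K:ℝ) * c₀ ≤ f (x 0) - flb := by linarith
  rw [le_div_iff₀ (mul_pos hμ0 (pow_pos hε 2))]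
  have hc : c₀ * (4*(1+B)*ρ'^2) = (ρ'-ρ)*ε^2 := by
    rw [hc₀def]; field_simp
  have h2 : (K:ℝ) * (c₀ * (4*(1+B)*ρ'^2)) ≤ (f (x 0) - flb) * (4*(1+B)*ρ'^2) := by
    nlinarith [mul_le_mul_of_nonneg_right h1 hPpos.le]
  rw [hc] at h2
  nlinarith [h2]
end

section
/- Lemma 4, KKT version: the inexact proximal step stays feasible before an ε-KKT point is reached. Let X ⊆ ℝ^d be convex, let 0 ≤ ρ < ρ̂ with ρ̂ > 1, set μ = ρ̂ − ρ, let ε > 0 and B ≥ 0, and set τ = (ρ̂ − ρ)ε²/(4(1+B)²ρ̂(2ρ̂ − ρ)). Let f, g : ℝ^d → ℝ, let x_k ∈ X, and define F_k(x) = f(x) + (ρ̂/2)‖x − x_k‖² and G_k(x) = g(x) + (ρ̂/2)‖x − x_k‖². Suppose x̂ ∈ X, 0 ≤ λ ≤ B, ζ_F is a μ-strong subgradient of F_k at x̂ over X, ζ_G is a μ-strong subgradient of G_k at x̂ over X, ν ∈ N_X(x̂), ζ_F + λζ_G + ν = 0, and λ·G_k(x̂) = 0. If ‖x̂ − x_k‖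 > ε/((1+B)ρ̂), then every x₊ ∈ X with F_k(x₊) ≤ F_k(x̂) + τ and G_k(x₊) ≤ τ satisfies g(x₊) ≤ 0. -/
set_option maxHeartbeats 1000000


open RealInnerProductSpace

/-- Lemma 4, KKT version: the inexact proximal step stays feasible
before an ε-KKT point is reached. -/
theorem inexact_step_feasible_KKT {d : ℕ}
    (X : Set (EuclideanSpace ℝ (Fin d))) (hX : Convex ℝ X)
    (ρ ρ' μ ε B τ : ℝ) (hρ : 0 ≤ ρ) (hρρ' : ρ < ρ') (hρ' : 1 < ρ')
    (hμ : μ = ρ' - ρ) (hε : 0 < ε) (hB : 0 ≤ B)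
    (hτ : τ = (ρ' - ρ) * ε ^ 2 / (4 * (1 + B) ^ 2 * ρ' * (2 * ρ' - ρ)))
    (f g : EuclideanSpace ℝ (Fin d) → ℝ)
    (xk : EuclideanSpace ℝ (Fin d)) (hxk : xk ∈ X)
    (Fk Gk : EuclideanSpace ℝ (Fin d) → ℝ)
    (hFk : ∀ x, Fk x = f x + ρ' / 2 * ‖x - xk‖ ^ 2)
    (hGk : ∀ x, Gk x = g x + ρ' / 2 * ‖x - xk‖ ^ 2)
    (xh : EuclideanSpace ℝ (Fin d)) (hxh : xh ∈ X)
    (lam : ℝ) (hlam : 0 ≤ lam) (hlamB : lam ≤ B)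
    (ζF ζG ν : EuclideanSpace ℝ (Fin d))
    (hζF : ∀ y ∈ X, Fk y ≥ Fk xh + ⟪ζF, y - xh⟫ + μ / 2 * ‖y - xh‖ ^ 2)
    (hζG : ∀ y ∈ X, Gk y ≥ Gk xh + ⟪ζG, y - xh⟫ + μ / 2 * ‖y - xh‖ ^ 2)
    (hν : ∀ y ∈ X, ⟪ν, y - xh⟫ ≤ 0)
    (heq : ζF + lam • ζG + ν = 0)
    (hcomp : lam * Gk xh = 0)
    (hfar : ε / ((1 + B) * ρ') < ‖xh - xk‖)
    (xp : EuclideanSpace ℝ (Fin d)) (hxp : xp ∈ X)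
    (hFxp : Fk xp ≤ Fk xh + τ) (hGxp : Gk xp ≤ τ) :
    g xp ≤ 0 := by
  have hμpos : 0 < μ := by rw [hμ]; linarith
  have hρ'pos : 0 < ρ' := by linarith
  have hcpos : (0:ℝ) < 1 + B := by linarith
  have h2ρ : 0 < 2 * ρ' - ρ := by linarith
  set s := ‖xp - xh‖ with hs
  set t := ‖xh - xk‖ with hts
  set r := ‖xp - xk‖ with hr
  have hs0 : 0 ≤ s := norm_nonneg _
  have hr0 : 0 ≤ r := norm_nonneg _
  have ht0 : 0 ≤ t := norm_nonneg _
  -- inner product fact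
  have hmv : ζF + lam • ζG = -ν := eq_neg_of_add_eq_zero_left heq
  have hip : 0 ≤ ⟪ζF, xp - xh⟫ + lam * ⟪ζG, xp - xh⟫ := by
    have h1 : ⟪ζF + lam • ζG, xp - xh⟫ = -⟪ν, xp - xh⟫ := by
      rw [hmv, inner_neg_left]
    rw [inner_add_left, real_inner_smul_left] at h1
    have := hν xp hxp
    linarith
  -- strong subgradient at xp
  have e1 := hζF xp hxp
  have e2 := hζG xp hxp
  have e2' : lam * (Gk xh + ⟪ζG, xp - xh⟫ + μ / 2 * s ^ 2) ≤ lam * Gk xp :=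
    mul_le_mul_of_nonneg_left e2 hlam
  have hA : Fk xh + (1 + lam) * (μ / 2 * s ^ 2) ≤ Fk xp + lam * Gk xp := by
    nlinarith [e1, e2', hip, hcomp]
  -- bound on s²
  have hB2 : μ * s ^ 2 ≤ 2 * τ := by
    have hgl : lam * Gk xp ≤ lam * τ := mul_le_mul_of_nonneg_left hGxp hlam
    have h1 : (1 + lam) * (μ / 2 * s ^ 2) ≤ (1 + lam) * τ := by nlinarith
    have h2 : μ / 2 * s ^ 2 ≤ τ :=
      le_of_mul_le_mul_left h1 (by linarith)
    linarith
  -- triangle inequality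
  have htri : t ≤ s + r := by
    have h := norm_sub_le_norm_sub_add_norm_sub xh xp xk
    rw [norm_sub_rev xh xp] at h
    exact h
  -- far condition
  have hfar' : ε < t * ((1 + B) * ρ') := by
    rw [div_lt_iff₀ (by positivity)] at hfar
    exact hfar
  have ht2 : ε ^ 2 < t ^ 2 * ((1 + B) ^ 2 * ρ' ^ 2) := by
    calc ε ^ 2 < (t * ((1 + B) * ρ')) ^ 2 := by
          exact pow_lt_pow_left₀ hfar' hε.le two_ne_zero
      _ = t ^ 2 * ((1 + B) ^ 2 * ρ' ^ 2) := by ring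
  have hts2 : t ^ 2 ≤ 2 * s ^ 2 + 2 * r ^ 2 := by nlinarith [htri, sq_nonneg (s - r)]
  -- τ equation
  have hτeq : τ * (4 * (1 + B) ^ 2 * ρ' * (2 * ρ' - ρ)) = μ * ε ^ 2 := by
    rw [hτ, hμ]
    field_simp
    exact mul_div_cancel_right₀ _ (ne_of_gt (by linarith))
  -- main chain
  have hchain : μ * ε ^ 2 < (4 * τ + 2 * μ * r ^ 2) * ((1 + B) ^ 2 * ρ' ^ 2) := by
    have ha : μ * t ^ 2 ≤ 4 * τ + 2 * μ * r ^ 2 := by nlinarith [mul_le_mul_of_nonneg_left hts2 hμpos.le]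
    have hb : μ * ε ^ 2 < μ * (t ^ 2 * ((1 + B) ^ 2 * ρ' ^ 2)) := mul_lt_mul_of_pos_left ht2 hμpos
    have hc : (μ * t ^ 2) * ((1 + B) ^ 2 * ρ' ^ 2) ≤ (4 * τ + 2 * μ * r ^ 2) * ((1 + B) ^ 2 * ρ' ^ 2) :=
      mul_le_mul_of_nonneg_right ha (by positivity)
    calc μ * ε ^ 2 < (μ * t ^ 2) * ((1 + B) ^ 2 * ρ' ^ 2) := by linarith [hb]
      _ ≤ (4 * τ + 2 * μ * r ^ 2) * ((1 + B) ^ 2 * ρ' ^ 2) := hc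
  have hcancel1 : 4 * τ * (2 * ρ' - ρ) < (4 * τ + 2 * μ * r ^ 2) * ρ' := by
    have hpos : 0 < (1 + B) ^ 2 * ρ' := by positivity
    have h1 : ((1 + B) ^ 2 * ρ') * (4 * τ * (2 * ρ' - ρ)) < ((1 + B) ^ 2 * ρ') * ((4 * τ + 2 * μ * r ^ 2) * ρ') := by
      calc ((1 + B) ^ 2 * ρ') * (4 * τ * (2 * ρ' - ρ)) = τ * (4 * (1 + B) ^ 2 * ρ' * (2 * ρ' - ρ)) := by ring
      _ = μ * ε ^ 2 := hτeq
      _ < (4 * τ + 2 * μ * r ^ 2) * ((1 + B) ^ 2 * ρ' ^ 2) := hchain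
      _ = ((1 + B) ^ 2 * ρ') * ((4 * τ + 2 * μ * r ^ 2) * ρ') := by ring
    exact lt_of_mul_lt_mul_left h1 hpos.le
  have hkey : 2 * τ < ρ' * r ^ 2 := by
    have h1 : μ * (4 * τ) < μ * (2 * ρ' * r ^ 2) := by
      have : 4 * τ * (2 * ρ' - ρ) - (4 * τ) * ρ' = 4 * τ * μ := by rw [hμ]; ring
      nlinarith [hcancel1]
    have := lt_of_mul_lt_mul_left h1 hμpos.le
    linarith
  have hgxp : g xp ≤ τ - ρ' / 2 * r ^ 2 := by
    have := hGk xp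
    linarith [hGxp, this.symm.le, this.le]
  linarith
end
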